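/- arXiv:1408.4048 — 9 statements merged into one kernel-verified Lean document; each statement's English description precedes it below -/
import Mathlib

section
/- Let (A, B, E, Σ_A, Σ_B, {π_e}) be a satisfiable projection game with E nonempty, witnessed by a fully satisfying assignment (φ_A^{OPT}, φ_B^{OPT}), and let p̄ = (1/|E|) · Σ_{(a,b) ∈ E} |π_{(a,b)}^{-1}(φ_B^{OPT}(b))|. Let φ_B* : B → Σ_B be any assignment such that for every b ∈ B and every σ ∈ Σ_B one has Σ_{a ∈ N(b)} |π_{(a,b)}^{-1}(φ_B*(b))| ≥ Σ_{a ∈ N(b)} |π_{(a,b)}^{-1}(σ)|. Then there exists φ_A : A → Σ_A such that the number of edges satisfied by (φ_A, φ_B*) is at least |E| · p̄ / |Σ_A|. -/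
/-- greedy assignment guarantee `|E|·p̄/|Σ_A|` for satisfiable projection
games. -/
theorem stmt_2 {A B LA LB : Type} [Fintype A] [Fintype B] [Fintype LA] [Fintype LB]
    [DecidableEq A] [DecidableEq B] [DecidableEq LA] [DecidableEq LB]
    (E : Finset (A × B)) (π : A × B → LA → LB)
    (hE : E.Nonempty)
    (φAopt : A → LA) (φBopt : B → LB)
    (hopt : ∀ e ∈ E, π e (φAopt e.1) = φBopt e.2)
    (pbar : ℝ)
    (hpbar : pbar = (∑ e ∈ E,
        ((Finset.univ.filter fun s : LA => π e s = φBopt e.2).card : ℝ)) / E.card)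
    (φBstar : B → LB)
    (hmax : ∀ (b : B) (σ : LB),
      ∑ a ∈ Finset.univ.filter (fun a : A => (a, b) ∈ E),
          (Finset.univ.filter fun s : LA => π (a, b) s = σ).card ≤
        ∑ a ∈ Finset.univ.filter (fun a : A => (a, b) ∈ E),
          (Finset.univ.filter fun s : LA => π (a, b) s = φBstar b).card) :
    ∃ φA : A → LA,
      (E.card : ℝ) * pbar / (Fintype.card LA) ≤
        ((E.filter fun e => π e (φA e.1) = φBstar e.2).card : ℝ) := by
  classical
  obtain ⟨e0, he0⟩ := hE
  haveI : Nonempty LA := ⟨φAopt e0.1⟩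
  set f : A → LA → ℕ := fun a s =>
    ((E.filter fun e => e.1 = a).filter fun e => π e s = φBstar e.2).card with hf
  have hex : ∀ a : A, ∃ s : LA, ∀ t : LA, f a t ≤ f a s := by
    intro a
    obtain ⟨s, _, hs⟩ := Finset.exists_max_image (Finset.univ : Finset LA) (f a)
      Finset.univ_nonempty
    exact ⟨s, fun t => hs t (Finset.mem_univ t)⟩
  choose φA hφA using hex
  refine ⟨φA, ?_⟩
  set N := (E.filter fun e => π e (φA e.1) = φBstar e.2).card with hN
  -- split a sum over E by the B-coordinate
  have hsplit : ∀ (g : A × B → ℕ), ∑ e ∈ E, g e =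
      ∑ b : B, ∑ a ∈ Finset.univ.filter (fun a : A => (a, b) ∈ E), g (a, b) := by
    intro g
    have : ∑ b : B, ∑ a ∈ Finset.univ.filter (fun a : A => (a, b) ∈ E), g (a, b)
        = ∑ b : B, ∑ a : A, if (a, b) ∈ E then g (a, b) else 0 := by
      refine Finset.sum_congr rfl fun b _ => ?_
      rw [Finset.sum_filter]
    rw [this, Finset.sum_comm, ← Finset.sum_product']
    rw [Finset.univ_product_univ, ← Finset.sum_filter]
    congr 1
    ext e
    simp
  -- step 1 : N = ∑ a, f a (φA a)
  have step1 : N = ∑ a : A, f a (φA a) := by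
    rw [hN, Finset.card_eq_sum_card_fiberwise
      (f := Prod.fst) (t := Finset.univ) (fun x _ => Finset.mem_univ _)]
    refine Finset.sum_congr rfl fun a _ => ?_
    rw [hf]
    simp only [Finset.filter_filter]
    congr 1
    apply Finset.filter_congr
    intro e _
    constructor
    · rintro ⟨h1, h2⟩; subst h2; exact ⟨rfl, h1⟩
    · rintro ⟨h1, h2⟩; subst h1; exact ⟨h2, rfl⟩
  -- step 3 : column sums
  have step3 : ∀ a : A, ∑ s : LA, f a s =
      ∑ e ∈ E.filter (fun e => e.1 = a),
        (Finset.univ.filter fun s : LA => π e s = φBstar e.2).card := by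
    intro a
    simp only [hf, Finset.card_filter]
    rw [Finset.sum_comm]
  -- step 2+3 : card LA * N ≥ ∑ e ∈ E, pre_star e
  have key : ∑ e ∈ E, (Finset.univ.filter fun s : LA => π e s = φBstar e.2).card
      ≤ Fintype.card LA * N := by
    have h4 : ∑ e ∈ E, (Finset.univ.filter fun s : LA => π e s = φBstar e.2).card
        = ∑ a : A, ∑ e ∈ E.filter (fun e => e.1 = a),
            (Finset.univ.filter fun s : LA => π e s = φBstar e.2).card := by
      rw [← Finset.sum_fiberwise E Prod.fst
        (fun e => (Finset.univ.filter fun s : LA => π e s = φBstar e.2).card)]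
    rw [h4, step1, Finset.mul_sum]
    refine Finset.sum_le_sum fun a _ => ?_
    rw [← step3 a]
    calc ∑ s : LA, f a s ≤ ∑ s : LA, f a (φA a) :=
          Finset.sum_le_sum fun s _ => hφA a s
      _ = Fintype.card LA * f a (φA a) := by
          rw [Finset.sum_const, smul_eq_mul, Finset.card_univ]
  -- step 5 : ∑ pre_opt ≤ ∑ pre_star
  have step5 : ∑ e ∈ E, (Finset.univ.filter fun s : LA => π e s = φBopt e.2).card
      ≤ ∑ e ∈ E, (Finset.univ.filter fun s : LA => π e s = φBstar e.2).card := by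
    rw [hsplit, hsplit]
    exact Finset.sum_le_sum fun b _ => hmax b (φBopt b)
  -- conclude over ℝ
  have hEpos : (0 : ℝ) < E.card := by
    exact_mod_cast Finset.card_pos.2 ⟨e0, he0⟩
  have hLApos : (0 : ℝ) < Fintype.card LA := by
    exact_mod_cast Fintype.card_pos
  rw [hpbar, div_le_iff₀ hLApos]
  have hS : (E.card : ℝ) * ((∑ e ∈ E,
      ((Finset.univ.filter fun s : LA => π e s = φBopt e.2).card : ℝ)) / E.card)
      = ∑ e ∈ E, ((Finset.univ.filter fun s : LA => π e s = φBopt e.2).card : ℝ) := by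
    exact mul_div_cancel₀ _ hEpos.ne'
  rw [hS]
  have : (∑ e ∈ E, ((Finset.univ.filter fun s : LA => π e s = φBopt e.2).card : ℝ))
      ≤ (Fintype.card LA : ℝ) * N := by
    have := le_trans step5 key
    exact_mod_cast this
  linarith [this]
end

section
/- Let (A, B, E, Σ_A, Σ_B, {π_e}) be a satisfiable projection game with fully satisfying assignment (φ_A^{OPT}, φ_B^{OPT}), and suppose the preimage sizes are uniform: there is a number p̄ ≥ 1 such that |π_{(a,b)}^{-1}(φ_B^{OPT}(b))| = p̄ for every edge (a,b) ∈ E. Fix a₀ ∈ A, and for each b ∈ N(a₀) let σ_b = π_{(a₀,b)}(φ_A^{OPT}(a₀)). For each a ∈ A define S_a = {σ ∈ Σ_A : π_{(a,b)}(σ) = σ_b for all b ∈ N(a) ∩ N(a₀)}. Let h(a₀) be the number of edges of E having at least one endpoint in N₂(a₀). Then for every φ_B* : B → Σ_B such that for each b ∈ B the value φ_B*(b) maximizes Σ_{a ∈ N(b) ∩ N₂(a₀)} |π_{(a,b)}^{-1}(σ) ∩ S_a| over all σ ∈ Σ_B, there exists φ_A : A → Σ_A with φ_A(a) ∈ S_a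 for every a ∈ A such that the number of edges satisfied by (φ_A, φ_B*) is at least h(a₀)/p̄. -/
/-- "know your neighbors' neighbors" guarantee `h(a₀)/p̄` for satisfiable
projection games with uniform preimage sizes. -/
theorem stmt_3 {A B LA LB : Type} [Fintype A] [Fintype B] [Fintype LA] [Fintype LB]
    [DecidableEq A] [DecidableEq B] [DecidableEq LA] [DecidableEq LB]
    (E : Finset (A × B)) (π : A × B → LA → LB)
    (φAopt : A → LA) (φBopt : B → LB)
    (hopt : ∀ e ∈ E, π e (φAopt e.1) = φBopt e.2)
    (pbar : ℝ) (hpbar1 : 1 ≤ pbar)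
    (hunif : ∀ e ∈ E,
      ((Finset.univ.filter fun s : LA => π e s = φBopt e.2).card : ℝ) = pbar)
    (a₀ : A)
    (Sa : A → Finset LA)
    (hSa : ∀ a : A, Sa a = Finset.univ.filter fun s : LA =>
      ∀ b : B, (a, b) ∈ E → (a₀, b) ∈ E → π (a, b) s = π (a₀, b) (φAopt a₀))
    (N₂ : Finset A)
    (hN₂ : N₂ = Finset.univ.filter fun a : A => ∃ b : B, (a, b) ∈ E ∧ (a₀, b) ∈ E)
    (h₀ : ℕ) (hh₀ : h₀ = (E.filter fun e => e.1 ∈ N₂).card)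
    (φBstar : B → LB)
    (hmaxStar : ∀ (b : B) (σ : LB),
      ∑ a ∈ Finset.univ.filter (fun a : A => (a, b) ∈ E ∧ a ∈ N₂),
          ((Finset.univ.filter fun s : LA => π (a, b) s = σ) ∩ Sa a).card ≤
        ∑ a ∈ Finset.univ.filter (fun a : A => (a, b) ∈ E ∧ a ∈ N₂),
          ((Finset.univ.filter fun s : LA => π (a, b) s = φBstar b) ∩ Sa a).card) :
    ∃ φA : A → LA, (∀ a : A, φA a ∈ Sa a) ∧
      (h₀ : ℝ) / pbar ≤
        ((E.filter fun e => π e (φA e.1) = φBstar e.2).card : ℝ) := by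
  classical
  have hpbar0 : (0:ℝ) < pbar := lt_of_lt_of_le one_pos hpbar1
  -- abbreviations
  set c : A × B → LB → ℕ :=
    fun e σ => ((Finset.univ.filter fun s : LA => π e s = σ) ∩ Sa e.1).card with hc
  set g : A → LA → ℕ :=
    fun a s => (E.filter fun e => e.1 = a ∧ π e s = φBstar e.2).card with hg
  -- the optimal assignment lies in every Sa
  have hoptSa : ∀ a, φAopt a ∈ Sa a := by
    intro a
    rw [hSa]
    simp only [Finset.mem_filter, Finset.mem_univ, true_and]
    intro b hab h0b
    rw [hopt _ hab, hopt _ h0b]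
  -- greedy choice of φA
  have hchoice : ∀ a : A, ∃ s, s ∈ Sa a ∧ ∀ s' ∈ Sa a, g a s' ≤ g a s := by
    intro a
    obtain ⟨s, hs, hmax⟩ := Finset.exists_max_image (Sa a) (g a) ⟨_, hoptSa a⟩
    exact ⟨s, hs, hmax⟩
  choose φA hφA hφAmax using hchoice
  refine ⟨φA, hφA, ?_⟩
  -- regrouping lemmas
  have regroupA : ∀ f : A × B → ℕ,
      ∑ e ∈ E.filter (fun e => e.1 ∈ N₂), f e
        = ∑ a ∈ N₂, ∑ e ∈ E.filter (fun e => e.1 = a), f e := by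
    intro f
    rw [← Finset.sum_fiberwise_of_maps_to (g := Prod.fst) (t := N₂)
      (fun e he => (Finset.mem_filter.mp he).2) f]
    refine Finset.sum_congr rfl fun a ha => ?_
    congr 1
    rw [Finset.filter_filter]
    ext e
    simp only [Finset.mem_filter]
    constructor
    · rintro ⟨he, _, h2⟩; exact ⟨he, h2⟩
    · rintro ⟨he, h2⟩; exact ⟨he, h2 ▸ ha, h2⟩
  have regroupB : ∀ f : A × B → ℕ,
      ∑ e ∈ E.filter (fun e => e.1 ∈ N₂), f e
        = ∑ b : B, ∑ a ∈ Finset.univ.filter (fun a : A => (a, b) ∈ E ∧ a ∈ N₂), f (a, b) := by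
    intro f
    rw [← Finset.sum_fiberwise_of_maps_to (g := Prod.snd) (t := (Finset.univ : Finset B))
      (fun e _ => Finset.mem_univ _) f]
    refine Finset.sum_congr rfl fun b _ => ?_
    refine Finset.sum_nbij' (i := Prod.fst) (j := fun a => (a, b)) ?_ ?_ ?_ ?_ ?_
    · intro e he
      simp only [Finset.mem_filter, Finset.mem_univ, true_and] at he ⊢
      obtain ⟨⟨he1, he2⟩, he3⟩ := he
      subst he3
      exact ⟨by simpa using he1, he2⟩
    · intro a ha
      simp only [Finset.mem_filter, Finset.mem_univ, true_and] at ha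
      simp [ha.1, ha.2]
    · intro e he
      simp only [Finset.mem_filter] at he
      rw [← he.2]
    · intro a _; rfl
    · intro e he
      simp only [Finset.mem_filter] at he
      rw [← he.2]
  -- per-a double counting
  have hswap : ∀ a : A, ∑ s ∈ Sa a, g a s
      = ∑ e ∈ E.filter (fun e => e.1 = a), c e (φBstar e.2) := by
    intro a
    have h1 : ∀ s : LA, g a s
        = ∑ e ∈ E.filter (fun e => e.1 = a), if π e s = φBstar e.2 then 1 else 0 := by
      intro s
      rw [hg]
      simp only
      rw [← Finset.filter_filter, Finset.card_filter]
    calc ∑ s ∈ Sa a, g a s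
        = ∑ s ∈ Sa a, ∑ e ∈ E.filter (fun e => e.1 = a),
            if π e s = φBstar e.2 then 1 else 0 := by
          exact Finset.sum_congr rfl fun s _ => h1 s
      _ = ∑ e ∈ E.filter (fun e => e.1 = a), ∑ s ∈ Sa a,
            if π e s = φBstar e.2 then 1 else 0 := Finset.sum_comm
      _ = ∑ e ∈ E.filter (fun e => e.1 = a), c e (φBstar e.2) := by
          refine Finset.sum_congr rfl fun e he => ?_
          rw [← Finset.card_filter]
          rw [hc]
          simp only
          have he1 : e.1 = a := (Finset.mem_filter.mp he).2
          rw [he1]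
          congr 1
          ext s
          simp only [Finset.mem_filter, Finset.mem_inter, Finset.mem_univ, true_and]
          exact and_comm
  -- |Sa a| ≤ pbar for a ∈ N₂
  have hcard_le : ∀ a ∈ N₂, ((Sa a).card : ℝ) ≤ pbar := by
    intro a ha
    rw [hN₂] at ha
    simp only [Finset.mem_filter, Finset.mem_univ, true_and] at ha
    obtain ⟨b, hab, h0b⟩ := ha
    have hsub : Sa a ⊆ Finset.univ.filter (fun s : LA => π (a, b) s = φBopt b) := by
      intro s hs
      rw [hSa] at hs
      simp only [Finset.mem_filter, Finset.mem_univ, true_and] at hs ⊢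
      rw [hs b hab h0b]
      exact hopt _ h0b
    calc ((Sa a).card : ℝ) ≤ _ := Nat.cast_le.mpr (Finset.card_le_card hsub)
      _ = pbar := hunif (a, b) hab
  -- each c (a,b) (φBopt b) ≥ 1 on relevant pairs
  have hc1 : ∀ (b : B) (a : A), (a, b) ∈ E → 1 ≤ c (a, b) (φBopt b) := by
    intro b a hab
    rw [hc]
    simp only
    refine Finset.card_pos.mpr ⟨φAopt a, ?_⟩
    simp only [Finset.mem_inter, Finset.mem_filter, Finset.mem_univ, true_and]
    exact ⟨hopt _ hab, hoptSa a⟩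
  -- main counting chain in ℕ: h₀ ≤ ∑_{e : e.1 ∈ N₂} c e (φBstar e.2)
  have chain1 : h₀ ≤ ∑ e ∈ E.filter (fun e => e.1 ∈ N₂), c e (φBstar e.2) := by
    have h0eq : h₀ = ∑ b : B,
        ∑ a ∈ Finset.univ.filter (fun a : A => (a, b) ∈ E ∧ a ∈ N₂), 1 := by
      rw [hh₀, Finset.card_eq_sum_ones, regroupB (fun _ => 1)]
    rw [h0eq, regroupB (fun e => c e (φBstar e.2))]
    refine Finset.sum_le_sum fun b _ => ?_
    calc ∑ a ∈ Finset.univ.filter (fun a : A => (a, b) ∈ E ∧ a ∈ N₂), 1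
        ≤ ∑ a ∈ Finset.univ.filter (fun a : A => (a, b) ∈ E ∧ a ∈ N₂),
            c (a, b) (φBopt b) := by
          refine Finset.sum_le_sum fun a ha => ?_
          simp only [Finset.mem_filter, Finset.mem_univ, true_and] at ha
          exact hc1 b a ha.1
      _ ≤ ∑ a ∈ Finset.univ.filter (fun a : A => (a, b) ∈ E ∧ a ∈ N₂),
            c (a, b) (φBstar b) := hmaxStar b (φBopt b)
  -- per-a averaging
  have chain2 : ∀ a : A, ∑ e ∈ E.filter (fun e => e.1 = a), c e (φBstar e.2)
      ≤ (Sa a).card * g a (φA a) := by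
    intro a
    rw [← hswap a]
    have := Finset.sum_le_card_nsmul (Sa a) (g a) (g a (φA a)) (hφAmax a)
    simpa using this
  -- the greedy count is below the satisfied-edge count
  have chain3 : ∑ a ∈ N₂, g a (φA a)
      ≤ (E.filter fun e => π e (φA e.1) = φBstar e.2).card := by
    have heq : ∀ a : A, g a (φA a)
        = ∑ e ∈ E.filter (fun e => e.1 = a),
            if π e (φA e.1) = φBstar e.2 then 1 else 0 := by
      intro a
      rw [hg]
      simp only
      rw [← Finset.filter_filter, Finset.card_filter]
      refine Finset.sum_congr rfl fun e he => ?_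
      have he1 : e.1 = a := (Finset.mem_filter.mp he).2
      rw [he1]
    calc ∑ a ∈ N₂, g a (φA a)
        = ∑ e ∈ E.filter (fun e => e.1 ∈ N₂),
            if π e (φA e.1) = φBstar e.2 then 1 else 0 := by
          rw [regroupA (fun e => if π e (φA e.1) = φBstar e.2 then 1 else 0)]
          exact Finset.sum_congr rfl fun a _ => heq a
      _ = (E.filter fun e => e.1 ∈ N₂ ∧ π e (φA e.1) = φBstar e.2).card := by
          rw [Finset.card_filter, Finset.sum_filter]
          refine Finset.sum_congr rfl fun e _ => ?_
          by_cases h1 : e.1 ∈ N₂ <;> by_cases h2 : π e (φA e.1) = φBstar e.2 <;>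
            simp [h1, h2]
      _ ≤ (E.filter fun e => π e (φA e.1) = φBstar e.2).card := by
          apply Finset.card_le_card
          intro e he
          simp only [Finset.mem_filter] at he ⊢
          exact ⟨he.1, he.2.2⟩
  -- assemble
  have natstep : h₀ ≤ ∑ a ∈ N₂, (Sa a).card * g a (φA a) := by
    calc h₀ ≤ ∑ e ∈ E.filter (fun e => e.1 ∈ N₂), c e (φBstar e.2) := chain1
      _ = ∑ a ∈ N₂, ∑ e ∈ E.filter (fun e => e.1 = a), c e (φBstar e.2) :=
          regroupA (fun e => c e (φBstar e.2))
      _ ≤ ∑ a ∈ N₂, (Sa a).card * g a (φA a) :=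
          Finset.sum_le_sum fun a _ => chain2 a
  rw [div_le_iff₀ hpbar0]
  calc (h₀ : ℝ) ≤ ∑ a ∈ N₂, ((Sa a).card : ℝ) * (g a (φA a) : ℝ) := by
        calc (h₀ : ℝ) ≤ ((∑ a ∈ N₂, (Sa a).card * g a (φA a) : ℕ) : ℝ) :=
              Nat.cast_le.mpr natstep
          _ = ∑ a ∈ N₂, ((Sa a).card : ℝ) * (g a (φA a) : ℝ) := by push_cast; rfl
    _ ≤ ∑ a ∈ N₂, pbar * (g a (φA a) : ℝ) := by
        refine Finset.sum_le_sum fun a ha => ?_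
        exact mul_le_mul_of_nonneg_right (hcard_le a ha) (Nat.cast_nonneg _)
    _ = pbar * ∑ a ∈ N₂, (g a (φA a) : ℝ) := by rw [Finset.mul_sum]
    _ ≤ pbar * ((E.filter fun e => π e (φA e.1) = φBstar e.2).card : ℝ) := by
        refine mul_le_mul_of_nonneg_left ?_ (le_of_lt hpbar0)
        calc ∑ a ∈ N₂, (g a (φA a) : ℝ)
            = ((∑ a ∈ N₂, g a (φA a) : ℕ) : ℝ) := by push_cast; rfl
          _ ≤ _ := Nat.cast_le.mpr chain3
    _ = ((E.filter fun e => π e (φA e.1) = φBstar e.2).card : ℝ) * pbar := mul_comm _ _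
end

section
/- Let G = (A, B, E) be a finite bipartite graph with E ⊆ A × B and B nonempty, and let W ⊆ A ∪ B be any set of vertices. Then Σ_{a ∈ A} |E_{(N(a) ∪ N₂(a)) ∖ W}| ≥ |E_{(A ∪ B) ∖ W}|² / |B|. -/
/-- `Σ_{a ∈ A} |E_{(N(a) ∪ N₂(a)) ∖ W}| ≥ |E_{(A ∪ B) ∖ W}|² / |B|`.
The vertex set `W ⊆ A ∪ B` is represented by its parts `WA ⊆ A` and `WB ⊆ B`. -/
theorem stmt_4 {A B : Type} [Fintype A] [Fintype B] [DecidableEq A] [DecidableEq B]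
    (E : Finset (A × B)) (hB : Nonempty B)
    (WA : Finset A) (WB : Finset B) :
    ((E.filter fun e => e.1 ∉ WA ∧ e.2 ∉ WB).card : ℝ) ^ 2 / (Fintype.card B) ≤
      ∑ a : A, ((E.filter fun e =>
          ((∃ b : B, (e.1, b) ∈ E ∧ (a, b) ∈ E) ∧ e.1 ∉ WA) ∧
          ((a, e.2) ∈ E ∧ e.2 ∉ WB)).card : ℝ) := by
  classical
  set F := E.filter fun e => e.1 ∉ WA ∧ e.2 ∉ WB with hF
  set dA : B → ℕ := fun y => (Finset.univ.filter fun a : A => (a, y) ∈ E).card with hdA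
  set dF : B → ℕ := fun y => (F.filter fun e => e.2 = y).card with hdF
  have key : ∀ a : A, (F.filter fun e => (a, e.2) ∈ E).card ≤
      (E.filter fun e =>
          ((∃ b : B, (e.1, b) ∈ E ∧ (a, b) ∈ E) ∧ e.1 ∉ WA) ∧
          ((a, e.2) ∈ E ∧ e.2 ∉ WB)).card := by
    intro a
    apply Finset.card_le_card
    intro e he
    simp only [hF, Finset.mem_filter] at he ⊢
    obtain ⟨⟨heE, h1, h2⟩, haE⟩ := he
    exact ⟨heE, ⟨⟨e.2, by simpa using heE, haE⟩, h1⟩, haE, h2⟩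
  have step2 : ∑ a : A, (F.filter fun e => (a, e.2) ∈ E).card = ∑ e ∈ F, dA e.2 := by
    simp only [Finset.card_filter, hdA]
    rw [Finset.sum_comm]
  have step3 : ∑ e ∈ F, dA e.2 = ∑ y : B, dF y * dA y := by
    rw [← Finset.sum_fiberwise' F (fun e => e.2) dA]
    exact Finset.sum_congr rfl fun y _ => by
      rw [Finset.sum_const, smul_eq_mul, hdF]
  have step4 : ∀ y : B, dF y ≤ dA y := by
    intro y
    apply Finset.card_le_card_of_injOn Prod.fst
    · intro e he
      simp only [Finset.mem_coe, hF, Finset.mem_filter] at he ⊢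
      obtain ⟨⟨heE, _, _⟩, h2⟩ := he
      exact ⟨Finset.mem_univ _, by rwa [← h2, Prod.mk.eta]⟩
    · intro e he e' he' h
      simp only [Finset.mem_coe, hF, Finset.mem_filter] at he he'
      exact Prod.ext h (he.2.trans he'.2.symm)
  have step5 : F.card = ∑ y : B, dF y :=
    Finset.card_eq_sum_card_fiberwise (fun e _ => Finset.mem_univ e.2)
  have hCS : ((F.card : ℝ)) ^ 2 ≤ (Fintype.card B : ℝ) * ∑ y : B, (dF y : ℝ) ^ 2 := by
    rw [step5]
    push_cast
    simpa using sq_sum_le_card_mul_sum_sq (s := (Finset.univ : Finset B))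
      (f := fun y => (dF y : ℝ))
  have hBpos : (0 : ℝ) < Fintype.card B := by exact_mod_cast Fintype.card_pos
  have hN : ∑ y : B, dF y * dA y ≤
      ∑ a : A, (E.filter fun e =>
          ((∃ b : B, (e.1, b) ∈ E ∧ (a, b) ∈ E) ∧ e.1 ∉ WA) ∧
          ((a, e.2) ∈ E ∧ e.2 ∉ WB)).card := by
    rw [← step3, ← step2]
    exact Finset.sum_le_sum fun a _ => key a
  rw [div_le_iff₀ hBpos]
  calc ((F.card : ℝ)) ^ 2 ≤ (Fintype.card B : ℝ) * ∑ y : B, (dF y : ℝ) ^ 2 := hCS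
    _ ≤ (Fintype.card B : ℝ) * ∑ y : B, (dF y : ℝ) * dA y := by
        refine mul_le_mul_of_nonneg_left (Finset.sum_le_sum fun y _ => ?_) hBpos.le
        rw [sq]
        exact mul_le_mul_of_nonneg_left (by exact_mod_cast step4 y) (by positivity)
    _ ≤ (Fintype.card B : ℝ) * ∑ a : A, ((E.filter fun e =>
          ((∃ b : B, (e.1, b) ∈ E ∧ (a, b) ∈ E) ∧ e.1 ∉ WA) ∧
          ((a, e.2) ∈ E ∧ e.2 ∉ WB)).card : ℝ) := by
        refine mul_le_mul_of_nonneg_left ?_ hBpos.le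
        exact_mod_cast hN
    _ = _ := by ring
end

section
/- Let G = (A, B, E) be a finite bipartite graph with E ⊆ A × B, where A and B are nonempty, and let W ⊆ A ∪ B. If |E_{(N(a) ∪ N₂(a)) ∖ W}| < |E|²/(4|A||B|) for every a ∈ A, then |E_{(A ∪ B) ∖ W}| ≤ |E|/2. -/
/-- if `|E_{(N(a) ∪ N₂(a)) ∖ W}| < |E|²/(4|A||B|)` for every `a ∈ A`,
then `|E_{(A ∪ B) ∖ W}| ≤ |E|/2`. -/
theorem stmt_5 {A B : Type} [Fintype A] [Fintype B] [DecidableEq A] [DecidableEq B]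
    (E : Finset (A × B)) (hA : Nonempty A) (hB : Nonempty B)
    (WA : Finset A) (WB : Finset B)
    (h : ∀ a : A, ((E.filter fun e =>
          ((∃ b : B, (e.1, b) ∈ E ∧ (a, b) ∈ E) ∧ e.1 ∉ WA) ∧
          ((a, e.2) ∈ E ∧ e.2 ∉ WB)).card : ℝ) <
        (E.card : ℝ) ^ 2 / (4 * Fintype.card A * Fintype.card B)) :
    ((E.filter fun e => e.1 ∉ WA ∧ e.2 ∉ WB).card : ℝ) ≤ (E.card : ℝ) / 2 := by
  classical
  set F := E.filter (fun e => e.1 ∉ WA ∧ e.2 ∉ WB) with hF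
  -- Step A: simplify the filtered set in the hypothesis
  have hg : ∀ a : A, (E.filter fun e =>
        ((∃ b : B, (e.1, b) ∈ E ∧ (a, b) ∈ E) ∧ e.1 ∉ WA) ∧
        ((a, e.2) ∈ E ∧ e.2 ∉ WB)) = F.filter (fun e => (a, e.2) ∈ E) := by
    intro a
    rw [hF, Finset.filter_filter]
    apply Finset.filter_congr
    intro e he
    constructor
    · rintro ⟨⟨_, h1⟩, h2, h3⟩; exact ⟨⟨h1, h3⟩, h2⟩
    · rintro ⟨⟨h1, h3⟩, h2⟩
      exact ⟨⟨⟨e.2, by simpa using he, h2⟩, h1⟩, h2, h3⟩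
  -- fiber sizes
  set f : B → ℕ := fun b => (F.filter (fun e => e.2 = b)).card with hf
  have hFs : F.card = ∑ b : B, f b := by
    exact Finset.card_eq_sum_card_fiberwise (fun e _ => Finset.mem_univ e.2)
  -- Step C: fiber ≤ degree
  have step : ∀ b : B, f b ≤ (Finset.univ.filter (fun a : A => (a, b) ∈ E)).card := by
    intro b
    apply Finset.card_le_card_of_injOn (fun e => e.1)
    · intro e he
      simp only [Finset.mem_coe, Finset.mem_filter, hF] at he
      obtain ⟨⟨heE, _⟩, heb⟩ := he
      simp only [Finset.mem_coe, Finset.mem_filter, Finset.mem_univ, true_and]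
      rw [← heb]; simpa using heE
    · intro e1 h1 e2 h2 hfst
      simp only [Finset.coe_filter, Set.mem_setOf_eq] at h1 h2
      exact Prod.ext hfst (h1.2.trans h2.2.symm)
  -- Step B: double counting
  have swap : ∑ a : A, (F.filter (fun e => (a, e.2) ∈ E)).card
      = ∑ e ∈ F, (Finset.univ.filter (fun a : A => (a, e.2) ∈ E)).card := by
    simp_rw [Finset.card_filter]
    rw [Finset.sum_comm]
  -- Step D: grouping
  have group : ∑ e ∈ F, f e.2 = ∑ b : B, f b ^ 2 := by
    rw [← Finset.sum_fiberwise_of_maps_to (t := Finset.univ)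
      (fun e (_ : e ∈ F) => Finset.mem_univ e.2) (fun e => f e.2)]
    refine Finset.sum_congr rfl fun b _ => ?_
    rw [Finset.sum_congr rfl (fun e he => by
      rw [(Finset.mem_filter.mp he).2]), Finset.sum_const, hf, sq, smul_eq_mul]
  have degsum : ∑ b : B, f b ^ 2 ≤ ∑ a : A, (F.filter (fun e => (a, e.2) ∈ E)).card := by
    rw [swap, ← group]
    exact Finset.sum_le_sum fun e _ => step e.2
  -- Cauchy-Schwarz in ℝ
  have cauchy : ((F.card : ℝ)) ^ 2 ≤ (Fintype.card B : ℝ) * ∑ b : B, (f b : ℝ) ^ 2 := by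
    rw [hFs]
    push_cast
    simpa using sq_sum_le_card_mul_sum_sq (s := (Finset.univ : Finset B))
      (f := fun b => (f b : ℝ))
  -- combine with hypothesis
  have hApos : (0:ℝ) < Fintype.card A := by positivity
  have hBpos : (0:ℝ) < Fintype.card B := by positivity
  have hsum : (∑ a : A, ((F.filter (fun e => (a, e.2) ∈ E)).card : ℝ))
      < (Fintype.card A : ℝ) * ((E.card:ℝ)^2 / (4 * Fintype.card A * Fintype.card B)) := by
    calc ∑ a : A, ((F.filter (fun e => (a, e.2) ∈ E)).card : ℝ)
        < ∑ _a : A, (E.card:ℝ)^2 / (4 * Fintype.card A * Fintype.card B) := by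
          apply Finset.sum_lt_sum_of_nonempty Finset.univ_nonempty
          intro a _
          rw [← hg a]; exact h a
      _ = _ := by rw [Finset.sum_const, Finset.card_univ, nsmul_eq_mul]
  have key : ((F.card : ℝ)) ^ 2 < (E.card : ℝ)^2 / 4 := by
    have h1 : (∑ b : B, (f b : ℝ) ^ 2) ≤ ∑ a : A, ((F.filter (fun e => (a, e.2) ∈ E)).card : ℝ) := by
      exact_mod_cast degsum
    have h2 : ((F.card : ℝ)) ^ 2 < (Fintype.card B : ℝ) *
        ((Fintype.card A : ℝ) * ((E.card:ℝ)^2 / (4 * Fintype.card A * Fintype.card B))) := by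
      calc ((F.card : ℝ)) ^ 2 ≤ (Fintype.card B : ℝ) * ∑ b : B, (f b : ℝ) ^ 2 := cauchy
        _ ≤ (Fintype.card B : ℝ) * ∑ a : A, ((F.filter (fun e => (a, e.2) ∈ E)).card : ℝ) := by
            exact mul_le_mul_of_nonneg_left h1 hBpos.le
        _ < _ := by exact mul_lt_mul_of_pos_left hsum hBpos
    have heq : (Fintype.card B : ℝ) *
        ((Fintype.card A : ℝ) * ((E.card:ℝ)^2 / (4 * Fintype.card A * Fintype.card B)))
        = (E.card : ℝ)^2 / 4 := by
      field_simp
    rwa [heq] at h2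
  have hFnn : (0:ℝ) ≤ (F.card : ℝ) := by positivity
  nlinarith [key, hFnn, Nat.cast_nonneg (α := ℝ) E.card]
end

section
/- Let G = (A, B, E) be a finite bipartite graph with E ⊆ A × B nonempty, and let h_max = max_{a ∈ A} |E(N₂(a))|, where E(S) is the set of edges with at least one endpoint in S. Then there exist an integer m ≥ 0, vertices a₁, …, a_m ∈ A, and pairwise disjoint vertex sets P₁, …, P_m ⊆ A ∪ B with P_i ⊆ N(a_i) ∪ N₂(a_i) for each i, such that Σ_{i=1}^m |E_{P_i}| ≥ |E|³/(8|A||B|·h_max). -/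
open Finset

lemma count_snd {A B : Type} [Fintype A] [Fintype B] [DecidableEq A] [DecidableEq B]
    (E' : Finset (A × B)) (y : B) :
    (E'.filter fun e => e.2 = y).card = (Finset.univ.filter fun a : A => (a, y) ∈ E').card := by
  apply Finset.card_bij (fun e _ => e.1)
  · intro e he
    simp only [mem_filter] at he ⊢
    exact ⟨mem_univ _, by rw [← he.2]; exact he.1⟩
  · intro e he e' he' h
    simp only [mem_filter] at he he'
    exact Prod.ext h (he.2.trans he'.2.symm)
  · intro a ha
    simp only [mem_filter] at ha
    exact ⟨(a, y), by simp [ha.2], rfl⟩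

lemma cherry {A B : Type} [Fintype A] [Fintype B] [DecidableEq A] [DecidableEq B]
    [Nonempty A] (E' : Finset (A × B)) :
    ∃ a : A, (E'.card : ℝ)^2 / ((Fintype.card A) * (Fintype.card B)) ≤
      ((E'.filter fun e => (a, e.2) ∈ E').card : ℝ) := by
  classical
  -- total count
  have key : ∑ a : A, ((E'.filter fun e => (a, e.2) ∈ E').card : ℝ)
      = ∑ y : B, (((E'.filter fun e => e.2 = y).card : ℝ))^2 := by
    have h1 : ∀ a : A, ((E'.filter fun e => (a, e.2) ∈ E').card : ℝ)
        = ∑ e ∈ E', (if (a, e.2) ∈ E' then (1:ℝ) else 0) := by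
      intro a
      rw [Finset.sum_boole]
    simp_rw [h1]
    rw [Finset.sum_comm]
    have h2 : ∀ e ∈ E', (∑ a : A, if (a, e.2) ∈ E' then (1:ℝ) else 0)
        = ((E'.filter fun e' => e'.2 = e.2).card : ℝ) := by
      intro e _
      rw [Finset.sum_boole, count_snd]
    rw [Finset.sum_congr rfl h2]
    -- now ∑ e ∈ E', f (e.2) = ∑ y, (fiber y).card * f y
    rw [← Finset.sum_fiberwise_of_maps_to (g := fun e : A × B => e.2)
        (fun e _ => Finset.mem_univ e.2) (fun e => ((E'.filter fun e' => e'.2 = e.2).card : ℝ))]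
    apply Finset.sum_congr rfl
    intro y _
    rw [Finset.sum_congr rfl (fun e he => by rw [(Finset.mem_filter.mp he).2]),
      Finset.sum_const, nsmul_eq_mul, sq]
  -- Cauchy-Schwarz
  have cs : (E'.card : ℝ)^2 ≤ (Fintype.card B) * ∑ y : B, (((E'.filter fun e => e.2 = y).card : ℝ))^2 := by
    have := sq_sum_le_card_mul_sum_sq (s := (univ : Finset B))
      (f := fun y => ((E'.filter fun e => e.2 = y).card : ℝ))
    have hc : ∑ y : B, ((E'.filter fun e => e.2 = y).card : ℝ) = E'.card := by
      rw [← Nat.cast_sum]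
      norm_cast
      exact (Finset.card_eq_sum_card_fiberwise (fun e _ => Finset.mem_univ e.2)).symm
    rw [hc] at this
    simpa using this
  rcases Nat.eq_zero_or_pos (Fintype.card B) with hB | hB
  · have hE' : E' = ∅ := Finset.eq_empty_of_forall_notMem
      (fun e _ => (Fintype.card_eq_zero_iff.mp hB).elim e.2)
    refine ⟨Classical.arbitrary A, ?_⟩
    subst hE'
    simp
  obtain ⟨a, -, ha⟩ := Finset.exists_max_image (univ : Finset A)
    (fun a => ((E'.filter fun e => (a, e.2) ∈ E').card : ℝ)) univ_nonempty
  refine ⟨a, ?_⟩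
  have hsum : ∑ a' : A, ((E'.filter fun e => (a', e.2) ∈ E').card : ℝ)
      ≤ (Fintype.card A) * ((E'.filter fun e => (a, e.2) ∈ E').card : ℝ) := by
    calc ∑ a' : A, ((E'.filter fun e => (a', e.2) ∈ E').card : ℝ)
        ≤ ∑ _a' : A, ((E'.filter fun e => (a, e.2) ∈ E').card : ℝ) :=
          Finset.sum_le_sum (fun a' _ => ha a' (mem_univ _))
      _ = _ := by rw [Finset.sum_const, nsmul_eq_mul, Finset.card_univ]
  rw [div_le_iff₀']
  · calc (E'.card:ℝ)^2 ≤ (Fintype.card B) * ∑ y : B, (((E'.filter fun e => e.2 = y).card : ℝ))^2 := cs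
      _ = (Fintype.card B) * ∑ a' : A, ((E'.filter fun e => (a', e.2) ∈ E').card : ℝ) := by rw [key]
      _ ≤ (Fintype.card B) * ((Fintype.card A) * ((E'.filter fun e => (a, e.2) ∈ E').card : ℝ)) := by
          apply mul_le_mul_of_nonneg_left hsum (by positivity)
      _ = _ := by ring
  · have hA : 0 < Fintype.card A := Fintype.card_pos
    positivity

lemma cons_disj {α : Type} {m : ℕ} (P0 : Finset α) (PA : Fin m → Finset α)
    (h : ∀ i j, i ≠ j → Disjoint (PA i) (PA j)) (h0 : ∀ k, Disjoint P0 (PA k)) :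
    ∀ i j : Fin (m+1), i ≠ j → Disjoint (Fin.cons (α := fun _ => Finset α) P0 PA i)
      (Fin.cons (α := fun _ => Finset α) P0 PA j) := by
  intro i j hij
  rcases Fin.eq_zero_or_eq_succ i with rfl | ⟨i', rfl⟩ <;>
    rcases Fin.eq_zero_or_eq_succ j with rfl | ⟨j', rfl⟩ <;>
    simp only [Fin.cons_zero, Fin.cons_succ]
  · exact absurd rfl hij
  · exact h0 _
  · exact (h0 _).symm
  · exact h _ _ (fun hc => hij (congrArg Fin.succ hc))


lemma aux {A B : Type} [Fintype A] [Fintype B] [DecidableEq A] [DecidableEq B] [Nonempty A]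
    (E : Finset (A × B)) (hE : E.Nonempty) (hA : 0 < Fintype.card A) (hB : 0 < Fintype.card B)
    (hmax : ℕ) (hmaxpos : 0 < hmax)
    (hbd : ∀ a : A, (E.filter fun e => ∃ b : B, (e.1, b) ∈ E ∧ (a, b) ∈ E).card ≤ hmax) :
    ∀ (n : ℕ) (E' : Finset (A × B)), E'.card ≤ n → E' ⊆ E →
    ∃ (m : ℕ) (av : Fin m → A) (PA : Fin m → Finset A) (PB : Fin m → Finset B),
      (∀ i j, i ≠ j → Disjoint (PA i) (PA j) ∧ Disjoint (PB i) (PB j)) ∧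
      (∀ i, (∀ a ∈ PA i, ∃ b : B, (a, b) ∈ E' ∧ (av i, b) ∈ E') ∧
        (∀ b ∈ PB i, (av i, b) ∈ E')) ∧
      ((E'.card : ℝ) - E.card / 2) *
          ((E.card : ℝ)^2 / (4 * Fintype.card A * Fintype.card B)) / hmax ≤
        ∑ i, ((E'.filter fun e => e.1 ∈ PA i ∧ e.2 ∈ PB i).card : ℝ) := by
  classical
  intro n
  induction n with
  | zero =>
      intro E' hcard _
      refine ⟨0, Fin.elim0, Fin.elim0, Fin.elim0, fun i => i.elim0, fun i => i.elim0, ?_⟩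
      rw [Fin.sum_univ_zero]
      have h1 : E'.card = 0 := Nat.le_zero.mp hcard
      rw [h1]
      apply div_nonpos_of_nonpos_of_nonneg _ (by positivity)
      apply mul_nonpos_of_nonpos_of_nonneg _ (by positivity)
      simp
      positivity
  | succ n ih =>
      intro E' hcard hsub
      by_cases hsmall : 2 * E'.card ≤ E.card
      · refine ⟨0, Fin.elim0, Fin.elim0, Fin.elim0, fun i => i.elim0, fun i => i.elim0, ?_⟩
        simp only [Finset.univ_eq_empty, Finset.sum_empty]
        apply div_nonpos_of_nonpos_of_nonneg _ (by positivity)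
        apply mul_nonpos_of_nonpos_of_nonneg _ (by positivity)
        rw [sub_nonpos, le_div_iff₀ (by norm_num : (0:ℝ) < 2)]
        exact_mod_cast (by linarith : (E'.card * 2 : ℕ) ≤ E.card)
      push_neg at hsmall
      obtain ⟨a, hcap⟩ := cherry E'
      set PA0 : Finset A := univ.filter (fun x : A => ∃ b : B, (x, b) ∈ E' ∧ (a, b) ∈ E') with hPA0
      set PB0 : Finset B := univ.filter (fun y : B => (a, y) ∈ E') with hPB0
      set cap : Finset (A × B) := E'.filter (fun e => e.1 ∈ PA0 ∧ e.2 ∈ PB0) with hcapdef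
      set E'' : Finset (A × B) := E'.filter (fun e => e.1 ∉ PA0 ∧ e.2 ∉ PB0) with hE''
      have hsub'' : E'' ⊆ E' := Finset.filter_subset _ _
      -- captured edges are many
      have hcapsub : (E'.filter fun e => (a, e.2) ∈ E') ⊆ cap := by
        intro e he
        rw [Finset.mem_filter] at he ⊢
        refine ⟨he.1, ?_, ?_⟩
        · rw [hPA0, Finset.mem_filter]
          exact ⟨mem_univ _, e.2, by rw [Prod.mk.eta]; exact he.1, he.2⟩
        · rw [hPB0, Finset.mem_filter]
          exact ⟨mem_univ _, he.2⟩
      have hcap2 : (E'.card : ℝ)^2 / ((Fintype.card A) * (Fintype.card B)) ≤ (cap.card : ℝ) :=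
        hcap.trans (by exact_mod_cast Finset.card_le_card hcapsub)
      -- removed edges are few
      have hrem : E'.card ≤ E''.card + hmax := by
        have hsd : (E' \ E'') ⊆ E.filter fun e => ∃ b : B, (e.1, b) ∈ E ∧ (a, b) ∈ E := by
          intro e he
          rw [Finset.mem_sdiff] at he
          obtain ⟨he1, he2⟩ := he
          rw [hE'', Finset.mem_filter] at he2
          push_neg at he2
          rw [Finset.mem_filter]
          refine ⟨hsub he1, ?_⟩
          by_cases h1 : e.1 ∈ PA0
          · rw [hPA0, Finset.mem_filter] at h1
            obtain ⟨-, b, hb1, hb2⟩ := h1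
            exact ⟨b, hsub hb1, hsub hb2⟩
          · have h3 : e.2 ∈ PB0 := he2 he1 h1
            rw [hPB0, Finset.mem_filter] at h3
            exact ⟨e.2, hsub (by rw [Prod.mk.eta]; exact he1), hsub h3.2⟩
        have h4 : (E' \ E'').card ≤ hmax := le_trans (Finset.card_le_card hsd) (hbd a)
        have h5 : (E' \ E'').card + E''.card = E'.card :=
          Finset.card_sdiff_add_card_eq_card hsub''
        omega
      -- at least one edge removed
      have hcapos : (0:ℝ) < cap.card := by
        refine lt_of_lt_of_le ?_ hcap2
        have hE'pos : 0 < E'.card := by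
          rcases Nat.eq_zero_or_pos E'.card with h | h
          · omega
          · exact h
        positivity
      have hlt : E''.card ≤ n := by
        obtain ⟨e, hecap⟩ := Finset.card_pos.mp (by exact_mod_cast hcapos)
        have he' : e ∈ E' := (Finset.mem_filter.mp hecap).1
        have hne : e ∉ E'' := by
          rw [hE'', Finset.mem_filter]
          push_neg
          intro _ h1
          exact absurd (Finset.mem_filter.mp hecap).2.1 h1
        have : E'' ⊂ E' := Finset.ssubset_iff_of_subset hsub'' |>.mpr ⟨e, he', hne⟩
        have := Finset.card_lt_card this
        omega
      obtain ⟨m, av, PA, PB, hdisj, hmem, hsum⟩ := ih E'' hlt (hsub''.trans hsub)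
      refine ⟨m + 1, Fin.cons a av, Fin.cons PA0 PA, Fin.cons PB0 PB, ?_, ?_, ?_⟩
      · intro i j hij
        constructor
        · refine cons_disj PA0 PA (fun i j h => (hdisj i j h).1) ?_ i j hij
          intro k
          rw [Finset.disjoint_left]
          intro x hx0 hxk
          obtain ⟨b, hb1, -⟩ := (hmem k).1 x hxk
          rw [hE'', Finset.mem_filter] at hb1
          exact hb1.2.1 hx0
        · refine cons_disj PB0 PB (fun i j h => (hdisj i j h).2) ?_ i j hij
          intro k
          rw [Finset.disjoint_left]
          intro y hy0 hyk
          have hb1 := (hmem k).2 y hyk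
          rw [hE'', Finset.mem_filter] at hb1
          exact hb1.2.2 hy0
      · intro i
        rcases Fin.eq_zero_or_eq_succ i with rfl | ⟨i', rfl⟩ <;>
          simp only [Fin.cons_zero, Fin.cons_succ]
        · constructor
          · intro x hx
            rw [hPA0, Finset.mem_filter] at hx
            exact hx.2
          · intro y hy
            rw [hPB0, Finset.mem_filter] at hy
            exact hy.2
        · exact ⟨fun x hx => (((hmem i').1 x hx).imp fun b hb => ⟨hsub'' hb.1, hsub'' hb.2⟩),
            fun y hy => hsub'' ((hmem i').2 y hy)⟩
      · -- arithmetic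
        rw [Fin.sum_univ_succ]
        simp only [Fin.cons_zero, Fin.cons_succ]
        have hS : ∑ i : Fin m, ((E''.filter fun e => e.1 ∈ PA i ∧ e.2 ∈ PB i).card : ℝ)
            ≤ ∑ i : Fin m, ((E'.filter fun e => e.1 ∈ PA i ∧ e.2 ∈ PB i).card : ℝ) := by
          apply Finset.sum_le_sum
          intro i _
          exact_mod_cast Finset.card_le_card (Finset.filter_subset_filter _ hsub'')
        set c : ℝ := (E.card:ℝ)^2/(4*Fintype.card A*Fintype.card B) with hc
        have hA' : (0:ℝ) < Fintype.card A := by exact_mod_cast hA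
        have hB' : (0:ℝ) < Fintype.card B := by exact_mod_cast hB
        have hc0 : (0:ℝ) ≤ c := by positivity
        have hcc : c ≤ (cap.card : ℝ) := by
          refine le_trans ?_ hcap2
          rw [hc, div_le_div_iff₀ (by positivity) (by positivity)]
          have h4 : (E.card:ℝ) ≤ 2 * E'.card := by
            exact_mod_cast Nat.le_of_lt hsmall
          have h5 : (E.card:ℝ)^2 ≤ 4*(E'.card:ℝ)^2 := by
            nlinarith [h4, (by positivity : (0:ℝ) ≤ (E.card:ℝ))]
          have h7 := mul_le_mul_of_nonneg_right h5
            (by positivity : (0:ℝ) ≤ (Fintype.card A:ℝ)*(Fintype.card B:ℝ))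
          nlinarith [h7]
        have hrem' : (E'.card:ℝ) ≤ E''.card + hmax := by exact_mod_cast hrem
        have hmaxR : (0:ℝ) < hmax := by exact_mod_cast hmaxpos
        have h6 : ((E'.card:ℝ) - E.card/2) * c ≤ ((E''.card:ℝ) - E.card/2) * c + c * hmax := by
          linarith [mul_le_mul_of_nonneg_right hrem' hc0]
        have key : ((E'.card:ℝ) - E.card/2) * c / hmax ≤
            ((E''.card:ℝ) - E.card/2) * c / hmax + c := by
          calc ((E'.card:ℝ) - E.card/2) * c / hmax
              ≤ (((E''.card:ℝ) - E.card/2)*c + c*hmax)/hmax :=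
                (div_le_div_iff_of_pos_right hmaxR).mpr h6
            _ = ((E''.card:ℝ) - E.card/2)*c/hmax + c := by
                rw [add_div, mul_div_cancel_right₀ _ (ne_of_gt hmaxR)]
        linarith [key, hsum, hS, hcc]


/-- divide-and-conquer — one can find disjoint pieces `P_i ⊆ N(a_i) ∪ N₂(a_i)`
whose internal edges total at least `|E|³/(8|A||B|·h_max)`. -/
theorem stmt_6 {A B : Type} [Fintype A] [Fintype B] [DecidableEq A] [DecidableEq B]
    (E : Finset (A × B)) (hE : E.Nonempty)
    (hmax : ℕ)
    (hhmax : hmax = Finset.univ.sup fun a : A =>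
      (E.filter fun e => ∃ b : B, (e.1, b) ∈ E ∧ (a, b) ∈ E).card) :
    ∃ (m : ℕ) (av : Fin m → A) (PA : Fin m → Finset A) (PB : Fin m → Finset B),
      (∀ i j, i ≠ j → Disjoint (PA i) (PA j) ∧ Disjoint (PB i) (PB j)) ∧
      (∀ i, (∀ a ∈ PA i, ∃ b : B, (a, b) ∈ E ∧ (av i, b) ∈ E) ∧
        (∀ b ∈ PB i, (av i, b) ∈ E)) ∧
      (E.card : ℝ) ^ 3 / (8 * Fintype.card A * Fintype.card B * hmax) ≤
        ∑ i, ((E.filter fun e => e.1 ∈ PA i ∧ e.2 ∈ PB i).card : ℝ) := by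
  classical
  obtain ⟨e0, he0⟩ := hE
  haveI : Nonempty A := ⟨e0.1⟩
  haveI : Nonempty B := ⟨e0.2⟩
  have hA : 0 < Fintype.card A := Fintype.card_pos
  have hB : 0 < Fintype.card B := Fintype.card_pos
  have hbd : ∀ a : A, (E.filter fun e => ∃ b : B, (e.1, b) ∈ E ∧ (a, b) ∈ E).card ≤ hmax := by
    intro a
    rw [hhmax]
    exact Finset.le_sup (f := fun a : A =>
      (E.filter fun e => ∃ b : B, (e.1, b) ∈ E ∧ (a, b) ∈ E).card) (mem_univ a)
  have hmaxpos : 0 < hmax := by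
    have h1 : e0 ∈ E.filter fun e => ∃ b : B, (e.1, b) ∈ E ∧ (e0.1, b) ∈ E := by
      rw [Finset.mem_filter]
      exact ⟨he0, e0.2, by rw [Prod.mk.eta]; exact he0, by rw [Prod.mk.eta]; exact he0⟩
    have h2 := Finset.card_pos.mpr ⟨e0, h1⟩
    exact lt_of_lt_of_le h2 (hbd e0.1)
  obtain ⟨m, av, PA, PB, hd, hm, hsum⟩ :=
    aux E ⟨e0, he0⟩ hA hB hmax hmaxpos hbd E.card E le_rfl Finset.Subset.rfl
  refine ⟨m, av, PA, PB, hd, hm, ?_⟩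
  refine le_trans (le_of_eq ?_) hsum
  have h1 : (Fintype.card A : ℝ) ≠ 0 := by positivity
  have h2 : (Fintype.card B : ℝ) ≠ 0 := by positivity
  have h3 : (hmax : ℝ) ≠ 0 := by
    have : (0:ℝ) < hmax := by exact_mod_cast hmaxpos
    positivity
  field_simp
  ring
end

section
/- Let (A, B, E, Σ_A, Σ_B, {π_e}) be a μ-smooth projection game and suppose B* ⊆ B satisfies |N(a) ∩ B*| > μ·d_a for every a ∈ A. If (φ_A, φ_B) and (φ_A', φ_B') are two assignments each of which satisfies every edge of E, and φ_B(b) = φ_B'(b) for all b ∈ B*, then φ_A(a) = φ_A'(a) for all a ∈ A. -/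
/-- in a μ-smooth projection game, if `B* ⊆ B` meets every neighborhood
`N(a)` in more than `μ·d_a` vertices, then any two fully satisfying assignments that
agree on `B*` agree on all of `A`. -/
theorem stmt_8 {A B LA LB : Type} [Fintype A] [Fintype B] [Fintype LA] [Fintype LB]
    [DecidableEq A] [DecidableEq B] [DecidableEq LA] [DecidableEq LB]
    (E : Finset (A × B)) (π : A × B → LA → LB)
    (μ : ℝ) (hμ0 : 0 ≤ μ) (hμ1 : μ ≤ 1)
    (hsmooth : ∀ (a : A) (σ σ' : LA), σ ≠ σ' →
      ((Finset.univ.filter fun b : B =>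
          (a, b) ∈ E ∧ π (a, b) σ = π (a, b) σ').card : ℝ) ≤
        μ * ((Finset.univ.filter fun b : B => (a, b) ∈ E).card : ℝ))
    (Bstar : Finset B)
    (hBstar : ∀ a : A,
      μ * ((Finset.univ.filter fun b : B => (a, b) ∈ E).card : ℝ) <
        (((Finset.univ.filter fun b : B => (a, b) ∈ E) ∩ Bstar).card : ℝ))
    (φA φA' : A → LA) (φB φB' : B → LB)
    (h1 : ∀ e ∈ E, π e (φA e.1) = φB e.2)
    (h2 : ∀ e ∈ E, π e (φA' e.1) = φB' e.2)
    (hagree : ∀ b ∈ Bstar, φB b = φB' b) :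
    ∀ a : A, φA a = φA' a := by
  intro a
  by_contra hne
  have hsub : (Finset.univ.filter fun b : B => (a, b) ∈ E) ∩ Bstar ⊆
      Finset.univ.filter fun b : B => (a, b) ∈ E ∧ π (a, b) (φA a) = π (a, b) (φA' a) := by
    intro b hb
    simp only [Finset.mem_inter, Finset.mem_filter] at hb ⊢
    obtain ⟨⟨-, hE⟩, hBs⟩ := hb
    refine ⟨Finset.mem_univ b, hE, ?_⟩
    rw [h1 (a, b) hE, h2 (a, b) hE, hagree b hBs]
  have hc := Finset.card_le_card hsub
  have := hsmooth a (φA a) (φA' a) hne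
  have := hBstar a
  have : ((((Finset.univ.filter fun b : B => (a, b) ∈ E)) ∩ Bstar).card : ℝ) ≤
      ((Finset.univ.filter fun b : B =>
        (a, b) ∈ E ∧ π (a, b) (φA a) = π (a, b) (φA' a)).card : ℝ) := by
    exact_mod_cast hc
  linarith
end

section
/- There exist absolute constants C ≥ 1 and C' ≥ 1 such that the following holds. Let G = (A, B, E) be a finite bipartite graph with E ⊆ A × B and |A| ≥ 2, and let μ ∈ (0,1). If every a ∈ A has degree d_a ≥ C·log(|A|)/μ, then there exists a subset B* ⊆ B with |B*| ≤ C'·μ·|B| such that |N(a) ∩ B*| > μ·d_a for every a ∈ A. -/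
open Finset

private lemma stmt9_tilt {B : Type} [Fintype B] [DecidableEq B] (q : ℝ) (h : B → ℝ) :
    ∑ S ∈ (univ : Finset B).powerset,
      ((∏ _b ∈ S, q) * ∏ _b ∈ univ \ S, (1 - q)) * ∏ b ∈ S, h b
      = ∏ b ∈ (univ : Finset B), (q * h b + (1 - q)) := by
  rw [Finset.prod_add]
  apply Finset.sum_congr rfl
  intro S _
  rw [Finset.prod_mul_distrib]
  ring

set_option maxHeartbeats 1600000 in
/-- there are absolute constants `C, C' ≥ 1` such that any bipartite graph
with `|A| ≥ 2` and all degrees in `A` at least `C·log|A|/μ` admits `B* ⊆ B` of size at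
most `C'·μ·|B|` hitting every `N(a)` in more than `μ·d_a` vertices. -/
theorem stmt_9 :
    ∃ C C' : ℝ, 1 ≤ C ∧ 1 ≤ C' ∧
      ∀ (A B : Type) [Fintype A] [Fintype B] [DecidableEq A] [DecidableEq B]
        (E : Finset (A × B)) (μ : ℝ),
        2 ≤ Fintype.card A → 0 < μ → μ < 1 →
        (∀ a : A, C * Real.log (Fintype.card A) / μ ≤
          ((Finset.univ.filter fun b : B => (a, b) ∈ E).card : ℝ)) →
        ∃ Bstar : Finset B,
          (Bstar.card : ℝ) ≤ C' * μ * Fintype.card B ∧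
          ∀ a : A,
            μ * ((Finset.univ.filter fun b : B => (a, b) ∈ E).card : ℝ) <
              (((Finset.univ.filter fun b : B => (a, b) ∈ E) ∩ Bstar).card : ℝ) := by
  refine ⟨8, 4, by norm_num, by norm_num, ?_⟩
  intro A B _ _ _ _ E μ hA hμ0 hμ1 hdeg
  set K : ℝ := (Fintype.card A : ℝ) with hK
  have hK2 : (2:ℝ) ≤ K := by rw [hK]; exact_mod_cast hA
  have hlogK : Real.log 2 ≤ Real.log K := Real.log_le_log (by norm_num) hK2
  have hlog2 : (0:ℝ) < Real.log 2 := Real.log_pos (by norm_num)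
  have hlogKpos : 0 < Real.log K := lt_of_lt_of_le hlog2 hlogK
  set D : A → Finset B := fun a => Finset.univ.filter fun b : B => (a, b) ∈ E with hD
  set d : A → ℝ := fun a => ((D a).card : ℝ) with hd
  have hdpos : ∀ a, 0 < d a := by
    intro a
    have := hdeg a
    have h8 : 0 < 8 * Real.log K / μ := by positivity
    linarith
  by_cases hμ4 : (4:ℝ)⁻¹ ≤ μ
  · -- easy case: take all of B
    refine ⟨Finset.univ, ?_, ?_⟩
    · have hB0 : (0:ℝ) ≤ (Fintype.card B : ℝ) := by positivity
      rw [Finset.card_univ]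
      nlinarith
    · intro a
      rw [Finset.inter_univ]
      have := hdpos a
      nlinarith
  · push_neg at hμ4
    -- main case
    set n : ℝ := (Fintype.card B : ℝ) with hn
    set q : ℝ := 2 * μ with hq
    have hq0 : 0 < q := by positivity
    have hq1 : q < 1/2 := by rw [hq]; linarith
    -- n is at least d a for any a; A is nonempty
    have hAne : Nonempty A := Fintype.card_pos_iff.mp (by omega)
    obtain ⟨a₀⟩ := hAne
    have hdn : ∀ a, d a ≤ n := by
      intro a
      have h0 : (D a).card ≤ Fintype.card B := by
        simpa using Finset.card_le_card (Finset.subset_univ (D a))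
      simp only [hd, hn]
      exact_mod_cast h0
    have hμn : 8 * Real.log K ≤ μ * n := by
      have h1 := hdeg a₀
      have h2 := hdn a₀
      have : 8 * Real.log K / μ ≤ n := le_trans h1 h2
      calc 8 * Real.log K = μ * (8 * Real.log K / μ) := by field_simp
        _ ≤ μ * n := by nlinarith
    have hμd : ∀ a, 8 * Real.log K ≤ μ * d a := by
      intro a
      have h1 := hdeg a
      calc 8 * Real.log K = μ * (8 * Real.log K / μ) := by field_simp
        _ ≤ μ * d a := by nlinarith [hdeg a]
    -- the weight
    set w : Finset B → ℝ := fun S => (∏ _b ∈ S, q) * ∏ _b ∈ univ \ S, (1 - q) with hw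
    have hwpos : ∀ S : Finset B, 0 < w S := by
      intro S
      apply mul_pos
      · exact Finset.prod_pos fun _ _ => hq0
      · exact Finset.prod_pos fun _ _ => by linarith
    have tilt' : ∀ h : B → ℝ, ∑ S ∈ (univ : Finset B).powerset, w S * ∏ b ∈ S, h b
        = ∏ b ∈ (univ : Finset B), (q * h b + (1 - q)) := by
      intro h
      simp only [hw]
      exact stmt9_tilt q h
    have hwsum : ∑ S ∈ (univ : Finset B).powerset, w S = 1 := by
      have h1 := tilt' (fun _ => 1)
      simp only [Finset.prod_const_one, mul_one] at h1
      rw [h1]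
      simp
    -- indicators
    set ind0 : Finset B → ℝ := fun S => if 4 * μ * n < (S.card : ℝ) then 1 else 0 with hind0
    set ind : A → Finset B → ℝ := fun a S => if μ * d a < ((D a ∩ S).card : ℝ) then 0 else 1 with hind
    set g : Finset B → ℝ := fun S => ind0 S + ∑ a : A, ind a S with hg
    -- bound on the size part
    have hT0 : ∑ S ∈ (univ : Finset B).powerset, w S * ind0 S < 1/2 := by
      have step1 : ∀ S ∈ (univ : Finset B).powerset,
          w S * ind0 S ≤ (2:ℝ) ^ (-(4*μ*n)) * (w S * ∏ _b ∈ S, (2:ℝ)) := by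
        intro S _
        rw [hind0]
        simp only []
        split_ifs with hc
        · rw [mul_one]
          have hprod2 : (∏ _b ∈ S, (2:ℝ)) = (2:ℝ) ^ (S.card : ℝ) := by
            rw [Finset.prod_const, ← Real.rpow_natCast]
          rw [hprod2]
          have key : (1:ℝ) ≤ (2:ℝ) ^ (-(4*μ*n)) * (2:ℝ) ^ (S.card : ℝ) := by
            rw [← Real.rpow_add (by norm_num)]
            apply Real.one_le_rpow (by norm_num)
            linarith
          nlinarith [hwpos S]
        · rw [mul_zero]
          have := hwpos S
          positivity
      have step2 : ∑ S ∈ (univ : Finset B).powerset, w S * ind0 S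
          ≤ (2:ℝ) ^ (-(4*μ*n)) * ((1 + q) ^ (Fintype.card B)) := by
        calc ∑ S ∈ (univ : Finset B).powerset, w S * ind0 S
            ≤ ∑ S ∈ (univ : Finset B).powerset,
              (2:ℝ) ^ (-(4*μ*n)) * (w S * ∏ _b ∈ S, (2:ℝ)) :=
              Finset.sum_le_sum step1
          _ = (2:ℝ) ^ (-(4*μ*n)) * ∑ S ∈ (univ : Finset B).powerset,
              w S * ∏ _b ∈ S, (2:ℝ) := by
              rw [Finset.mul_sum]
          _ = (2:ℝ) ^ (-(4*μ*n)) * ∏ _b ∈ (univ : Finset B), (q * 2 + (1 - q)) := by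
              rw [tilt' (fun _ => 2)]
          _ = (2:ℝ) ^ (-(4*μ*n)) * ((1 + q) ^ (Fintype.card B)) := by
              rw [Finset.prod_const, Finset.card_univ]
              ring_nf
      have step3 : (2:ℝ) ^ (-(4*μ*n)) * ((1 + q) ^ (Fintype.card B)) ≤ Real.exp (μ * n * (2 - 4 * Real.log 2)) := by
        have h1 : (2:ℝ) ^ (-(4*μ*n)) = Real.exp (Real.log 2 * (-(4*μ*n))) := by
          rw [Real.rpow_def_of_pos (by norm_num)]
        have h2 : (1 + q) ^ (Fintype.card B) ≤ Real.exp (q * n) := by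
          calc (1 + q) ^ (Fintype.card B) ≤ (Real.exp q) ^ (Fintype.card B) := by
                apply pow_le_pow_left₀ (by linarith)
                linarith [Real.add_one_le_exp q]
            _ = Real.exp (q * n) := by
                rw [← Real.exp_nat_mul, mul_comm, hn]
        calc (2:ℝ) ^ (-(4*μ*n)) * ((1 + q) ^ (Fintype.card B))
            ≤ Real.exp (Real.log 2 * (-(4*μ*n))) * Real.exp (q * n) := by
              rw [h1]
              exact mul_le_mul_of_nonneg_left h2 (Real.exp_nonneg _)
          _ = Real.exp (μ * n * (2 - 4 * Real.log 2)) := by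
              rw [← Real.exp_add]
              congr 1
              rw [hq]
              ring
      have step4 : Real.exp (μ * n * (2 - 4 * Real.log 2)) < 1/2 := by
        have hneg : 2 - 4 * Real.log 2 < 0 := by linarith [Real.log_two_gt_d9]
        have hA1 : 8 * Real.log 2 ≤ μ * n := by linarith [hμn, hlogK]
        have hmono := mul_le_mul_of_nonpos_right hA1 (le_of_lt hneg)
        have : μ * n * (2 - 4 * Real.log 2) ≤ 8 * Real.log 2 * (2 - 4 * Real.log 2) := by
          linarith [hmono]
        have h17 : (0:ℝ) < 32 * Real.log 2 - 17 := by linarith [Real.log_two_gt_d9]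
        have hprod := mul_pos hlog2 h17
        have hfin : 8 * Real.log 2 * (2 - 4 * Real.log 2) < -Real.log 2 := by
          nlinarith [hprod]
        calc Real.exp (μ * n * (2 - 4 * Real.log 2)) < Real.exp (-Real.log 2) := by
              apply Real.exp_lt_exp.mpr; linarith
          _ = 1/2 := by
              rw [Real.exp_neg, Real.exp_log (by norm_num)]
              norm_num
      linarith
    -- bound on each vertex part
    have hTa : ∀ a : A, ∑ S ∈ (univ : Finset B).powerset, w S * ind a S
        ≤ Real.exp (8 * Real.log K * (Real.log 2 - 1)) := by
      intro a
      set h : B → ℝ := fun b => if b ∈ D a then (2:ℝ)⁻¹ else 1 with hh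
      have hhpos : ∀ b, 0 < h b := by
        intro b; rw [hh]; dsimp only; split_ifs <;> norm_num
      have step1 : ∀ S ∈ (univ : Finset B).powerset,
          w S * ind a S ≤ (2:ℝ) ^ (μ * d a) * (w S * ∏ b ∈ S, h b) := by
        intro S _
        rw [hind]
        simp only []
        split_ifs with hc
        · rw [mul_zero]
          have hp : (0:ℝ) < ∏ b ∈ S, h b := Finset.prod_pos fun b _ => hhpos b
          have hr : (0:ℝ) < (2:ℝ) ^ (μ * d a) := Real.rpow_pos_of_pos (by norm_num) _
          exact le_of_lt (mul_pos hr (mul_pos (hwpos S) hp))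
        · push_neg at hc
          rw [mul_one]
          have hprodh : (∏ b ∈ S, h b) = (2:ℝ)⁻¹ ^ ((S ∩ D a).card) := by
            rw [hh]
            simp only []
            rw [Finset.prod_ite_mem S (D a) (fun _ => (2:ℝ)⁻¹), Finset.prod_const]
          rw [hprodh]
          have hcard : ((S ∩ D a).card : ℝ) ≤ μ * d a := by
            rw [Finset.inter_comm]; exact hc
          have key : (1:ℝ) ≤ (2:ℝ) ^ (μ * d a) * (2:ℝ)⁻¹ ^ ((S ∩ D a).card) := by
            have heq : (2:ℝ)⁻¹ ^ ((S ∩ D a).card) = (2:ℝ) ^ (-(((S ∩ D a).card : ℝ))) := by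
              rw [inv_pow, ← Real.rpow_natCast (2:ℝ), ← Real.rpow_neg (by norm_num)]
            rw [heq, ← Real.rpow_add (by norm_num)]
            apply Real.one_le_rpow (by norm_num)
            linarith
          calc w S ≤ w S * ((2:ℝ) ^ (μ * d a) * (2:ℝ)⁻¹ ^ ((S ∩ D a).card)) :=
                le_mul_of_one_le_right (hwpos S).le key
            _ = (2:ℝ) ^ (μ * d a) * (w S * (2:ℝ)⁻¹ ^ ((S ∩ D a).card)) := by ring
      have step2 : ∑ S ∈ (univ : Finset B).powerset, w S * ind a S
          ≤ (2:ℝ) ^ (μ * d a) * (1 - μ) ^ ((D a).card) := by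
        calc ∑ S ∈ (univ : Finset B).powerset, w S * ind a S
            ≤ ∑ S ∈ (univ : Finset B).powerset, (2:ℝ) ^ (μ * d a) * (w S * ∏ b ∈ S, h b) :=
              Finset.sum_le_sum step1
          _ = (2:ℝ) ^ (μ * d a) * ∑ S ∈ (univ : Finset B).powerset, (w S * ∏ b ∈ S, h b) := by
              rw [Finset.mul_sum]
          _ = (2:ℝ) ^ (μ * d a) * ∏ b ∈ (univ : Finset B), (q * h b + (1 - q)) := by
              rw [tilt' h]
          _ = (2:ℝ) ^ (μ * d a) * (1 - μ) ^ ((D a).card) := by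
              congr 1
              have : ∀ b : B, q * h b + (1 - q) = if b ∈ D a then (1 - μ) else 1 := by
                intro b
                rw [hh]
                simp only []
                split_ifs
                · rw [hq]; ring
                · ring
              rw [Finset.prod_congr rfl (fun b _ => this b)]
              rw [Finset.prod_ite_mem univ (D a) (fun _ => (1 - μ)), Finset.univ_inter, Finset.prod_const]
      have step3 : (2:ℝ) ^ (μ * d a) * (1 - μ) ^ ((D a).card) ≤ Real.exp (8 * Real.log K * (Real.log 2 - 1)) := by
        have h1 : (2:ℝ) ^ (μ * d a) = Real.exp (Real.log 2 * (μ * d a)) := by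
          rw [Real.rpow_def_of_pos (by norm_num)]
        have h2 : (1 - μ) ^ ((D a).card) ≤ Real.exp (-(μ * d a)) := by
          calc (1 - μ) ^ ((D a).card) ≤ (Real.exp (-μ)) ^ ((D a).card) := by
                apply pow_le_pow_left₀ (by linarith)
                linarith [Real.add_one_le_exp (-μ)]
            _ = Real.exp (-(μ * d a)) := by
                rw [← Real.exp_nat_mul]
                congr 1
                rw [hd]
                ring
        calc (2:ℝ) ^ (μ * d a) * (1 - μ) ^ ((D a).card)
            ≤ Real.exp (Real.log 2 * (μ * d a)) * Real.exp (-(μ * d a)) := by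
              rw [h1]
              exact mul_le_mul_of_nonneg_left h2 (Real.exp_nonneg _)
          _ = Real.exp (μ * d a * (Real.log 2 - 1)) := by
              rw [← Real.exp_add]
              congr 1
              ring
          _ ≤ Real.exp (8 * Real.log K * (Real.log 2 - 1)) := by
              apply Real.exp_le_exp.mpr
              have hlt : Real.log 2 - 1 ≤ 0 := by linarith [Real.log_two_lt_d9]
              have hmono := mul_le_mul_of_nonpos_right (hμd a) hlt
              linarith [hmono]
      linarith
    have hTsum : ∑ a : A, ∑ S ∈ (univ : Finset B).powerset, w S * ind a S < 1/2 := by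
      have h1 : ∑ a : A, ∑ S ∈ (univ : Finset B).powerset, w S * ind a S
          ≤ K * Real.exp (8 * Real.log K * (Real.log 2 - 1)) := by
        calc ∑ a : A, ∑ S ∈ (univ : Finset B).powerset, w S * ind a S
            ≤ ∑ _a : A, Real.exp (8 * Real.log K * (Real.log 2 - 1)) :=
              Finset.sum_le_sum fun a _ => hTa a
          _ = K * Real.exp (8 * Real.log K * (Real.log 2 - 1)) := by
              rw [Finset.sum_const, Finset.card_univ, nsmul_eq_mul, hK]
      have h2 : K * Real.exp (8 * Real.log K * (Real.log 2 - 1)) = Real.exp (Real.log K * (8 * Real.log 2 - 7)) := by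
        rw [← Real.exp_log (show (0:ℝ) < K by linarith), ← Real.exp_add]
        congr 1
        rw [Real.log_exp]
        ring
      have h3 : Real.exp (Real.log K * (8 * Real.log 2 - 7)) < 1/2 := by
        have hlt : 8 * Real.log 2 - 7 < -1 := by linarith [Real.log_two_lt_d9]
        calc Real.exp (Real.log K * (8 * Real.log 2 - 7)) < Real.exp (-Real.log 2) := by
              apply Real.exp_lt_exp.mpr
              have hmono := mul_lt_mul_of_pos_left hlt hlogKpos
              nlinarith [hmono, hlogK]
          _ = 1/2 := by rw [Real.exp_neg, Real.exp_log (by norm_num)]; norm_num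
      linarith
    -- total bound and extraction
    have htotal : ∑ S ∈ (univ : Finset B).powerset, w S * g S < 1 := by
      have : ∑ S ∈ (univ : Finset B).powerset, w S * g S
          = ∑ S ∈ (univ : Finset B).powerset, w S * ind0 S
            + ∑ a : A, ∑ S ∈ (univ : Finset B).powerset, w S * ind a S := by
        rw [hg]
        simp only [mul_add, Finset.mul_sum]
        rw [Finset.sum_add_distrib, Finset.sum_comm]
      rw [this]
      linarith
    have hexists : ∃ S ∈ (univ : Finset B).powerset, g S < 1 := by
      by_contra hcon
      push_neg at hcon
      have : (1:ℝ) ≤ ∑ S ∈ (univ : Finset B).powerset, w S * g S := by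
        rw [← hwsum]
        apply Finset.sum_le_sum
        intro S hS
        nlinarith [hwpos S, hcon S hS]
      linarith
    obtain ⟨S, _, hgS⟩ := hexists
    have hind0nn : (0:ℝ) ≤ ind0 S := by rw [hind0]; dsimp only; split_ifs <;> norm_num
    have hindnn : ∀ a : A, (0:ℝ) ≤ ind a S := by
      intro a; rw [hind]; dsimp only; split_ifs <;> norm_num
    have hsumnn : (0:ℝ) ≤ ∑ a : A, ind a S := Finset.sum_nonneg fun a _ => hindnn a
    refine ⟨S, ?_, ?_⟩
    · -- size bound
      by_contra hcon
      push_neg at hcon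
      have : ind0 S = 1 := by
        rw [hind0]
        dsimp only
        rw [if_pos]
        linarith
      rw [hg] at hgS
      simp only [] at hgS
      linarith
    · intro a
      by_contra hcon
      push_neg at hcon
      have h1 : ind a S = 1 := by
        rw [hind]
        dsimp only
        rw [if_neg]
        push_neg
        exact hcon
      have h2 : ind a S ≤ ∑ a' : A, ind a' S :=
        Finset.single_le_sum (fun a' _ => hindnn a') (Finset.mem_univ a)
      rw [hg] at hgS
      simp only [] at hgS
      linarith
end

section
/- Let G = (A, B, E) be a finite bipartite graph with E ⊆ A × B and let μ be a real number with 0 < μ < 1/4. Suppose that d_a ≥ 1/μ for every a ∈ A and that |A| ≤ |E|/4. Then there exists a subset B* ⊆ B with |B*| ≤ 8·μ·|B| such that Σ_{a ∈ S} d_a ≥ |E|/4, where S = {a ∈ A : |N(a) ∩ B*| > μ·d_a}. -/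
open Finset
section
variable {B : Type} [Fintype B] [DecidableEq B]

private lemma prod_ite_split' (f g : B → ℝ) (T : Finset B) :
    ∏ b, (if b ∈ T then f b else g b) = (∏ b ∈ T, f b) * ∏ b ∈ univ \ T, g b := by
  have h : (univ : Finset B) = T ∪ (univ \ T) := (Finset.union_sdiff_of_subset (subset_univ T)).symm
  rw [show (∏ b, (if b ∈ T then f b else g b)) = ∏ b ∈ T ∪ (univ \ T), (if b ∈ T then f b else g b) from by rw [← h],
    Finset.prod_union Finset.disjoint_sdiff]
  congr 1
  · exact Finset.prod_congr rfl fun b hb => if_pos hb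
  · exact Finset.prod_congr rfl fun b hb => if_neg (Finset.mem_sdiff.mp hb).2

private lemma sum_powerset_prod' (f g : B → ℝ) :
    ∑ T ∈ (univ : Finset B).powerset, ∏ b, (if b ∈ T then f b else g b)
      = ∏ b, (f b + g b) := by
  rw [Finset.prod_add]
  exact Finset.sum_congr rfl fun T _ => prod_ite_split' f g T

private noncomputable def ww (p : ℝ) (T : Finset B) : ℝ := ∏ b, (if b ∈ T then p else 1 - p)

private lemma sum_ww (p : ℝ) : ∑ T ∈ (univ : Finset B).powerset, ww p T = 1 := by
  rw [show (∑ T ∈ (univ : Finset B).powerset, ww p T)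
      = ∑ T ∈ (univ : Finset B).powerset, ∏ b, (if b ∈ T then p else 1 - p) from rfl,
    sum_powerset_prod']
  simp

private lemma ww_pos {p : ℝ} (hp0 : 0 < p) (hp1 : p < 1) (T : Finset B) : 0 < ww p T :=
  Finset.prod_pos fun _ _ => by split_ifs <;> linarith

private lemma exp_prod_ind (p : ℝ) (K : Finset B) :
    ∑ T ∈ (univ : Finset B).powerset,
      ww p T * ∏ b ∈ K, (if b ∈ T then (1:ℝ) else 0) = p ^ K.card := by
  have key : ∀ T : Finset B,
      ww p T * ∏ b ∈ K, (if b ∈ T then (1:ℝ) else 0)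
        = ∏ b, (if b ∈ T then p else (if b ∈ K then 0 else 1 - p)) := by
    intro T
    have h1 : (∏ b ∈ K, (if b ∈ T then (1:ℝ) else 0))
        = ∏ b, (if b ∈ K then (if b ∈ T then (1:ℝ) else 0) else 1) := by
      rw [Finset.prod_ite_mem, Finset.univ_inter]
    rw [ww, h1, ← Finset.prod_mul_distrib]
    refine Finset.prod_congr rfl fun b _ => ?_
    by_cases hbT : b ∈ T <;> by_cases hbK : b ∈ K <;> simp [hbT, hbK]
  rw [Finset.sum_congr rfl fun T _ => key T, sum_powerset_prod']
  rw [show (∏ b, (p + if b ∈ K then (0:ℝ) else 1 - p)) = ∏ b, (if b ∈ K then p else 1) from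
    Finset.prod_congr rfl fun b _ => by split_ifs <;> ring]
  rw [Finset.prod_ite_mem, Finset.univ_inter, Finset.prod_const]

private lemma card_inter_eq_sum (N T : Finset B) :
    ((N ∩ T).card : ℝ) = ∑ b ∈ N, (if b ∈ T then (1:ℝ) else 0) := by
  rw [Finset.sum_ite_mem, Finset.sum_const]
  simp

private lemma exp_X (p : ℝ) (N : Finset B) :
    ∑ T ∈ (univ : Finset B).powerset, ww p T * ((N ∩ T).card : ℝ) = p * N.card := by
  have h1 : ∀ T, ww p T * ((N ∩ T).card : ℝ)
      = ∑ b ∈ N, ww p T * (if b ∈ T then (1:ℝ) else 0) := by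
    intro T; rw [card_inter_eq_sum, Finset.mul_sum]
  rw [Finset.sum_congr rfl fun T _ => h1 T, Finset.sum_comm]
  have h2 : ∀ b : B, ∑ T ∈ (univ : Finset B).powerset, ww p T * (if b ∈ T then (1:ℝ) else 0) = p := by
    intro b
    have := exp_prod_ind p ({b} : Finset B)
    simpa using this
  rw [Finset.sum_congr rfl fun b _ => h2 b, Finset.sum_const]
  simp [mul_comm]

private lemma exp_X2 (p : ℝ) (N : Finset B) :
    ∑ T ∈ (univ : Finset B).powerset, ww p T * ((N ∩ T).card : ℝ)^2
      = p * N.card + p^2 * ((N.card:ℝ)^2 - N.card) := by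
  have h1 : ∀ T, ww p T * ((N ∩ T).card : ℝ)^2
      = ∑ b ∈ N, ∑ c ∈ N, ww p T * ((if b ∈ T then (1:ℝ) else 0) * (if c ∈ T then (1:ℝ) else 0)) := by
    intro T
    rw [card_inter_eq_sum, sq, Finset.sum_mul_sum]
    rw [Finset.mul_sum]
    exact Finset.sum_congr rfl fun b _ => by rw [Finset.mul_sum]
  rw [Finset.sum_congr rfl fun T _ => h1 T, Finset.sum_comm]
  have h2 : ∀ b ∈ N, ∑ T ∈ (univ : Finset B).powerset,
      ∑ c ∈ N, ww p T * ((if b ∈ T then (1:ℝ) else 0) * (if c ∈ T then (1:ℝ) else 0))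
      = ∑ c ∈ N, (if c = b then p else p^2) := by
    intro b _
    rw [Finset.sum_comm]
    refine Finset.sum_congr rfl fun c _ => ?_
    by_cases hbc : c = b
    · subst hbc
      have h0 := exp_prod_ind p ({c} : Finset B)
      simp only [Finset.prod_singleton, Finset.card_singleton, pow_one] at h0
      rw [if_pos rfl]
      calc ∑ T ∈ (univ : Finset B).powerset,
            ww p T * ((if c ∈ T then (1:ℝ) else 0) * (if c ∈ T then (1:ℝ) else 0))
          = ∑ T ∈ (univ : Finset B).powerset, ww p T * (if c ∈ T then (1:ℝ) else 0) :=
            Finset.sum_congr rfl fun T _ => by by_cases h : c ∈ T <;> simp [h]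
        _ = p := h0
    · have h0 := exp_prod_ind p ({b, c} : Finset B)
      simp only [Finset.prod_pair (fun h => hbc h.symm), Finset.card_pair (fun h => hbc h.symm)] at h0
      rw [if_neg hbc]
      exact h0
  rw [Finset.sum_congr rfl h2]
  have h3 : ∀ b ∈ N, ∑ c ∈ N, (if c = b then p else p^2)
      = N.card * p^2 + (p - p^2) := by
    intro b hb
    have hsplit : ∀ c ∈ N, (if c = b then p else p^2) = p^2 + (if c = b then p - p^2 else 0) := by
      intro c _; split_ifs <;> ring
    rw [Finset.sum_congr rfl hsplit, Finset.sum_add_distrib, Finset.sum_const,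
      Finset.sum_ite_eq' N b (fun _ => p - p^2), if_pos hb]
    push_cast
    ring
  rw [Finset.sum_congr rfl h3, Finset.sum_const]
  simp only [nsmul_eq_mul]
  ring

private lemma exp_var (p : ℝ) (N : Finset B) :
    ∑ T ∈ (univ : Finset B).powerset, ww p T * (((N ∩ T).card : ℝ) - p * N.card)^2
      = p * (1 - p) * N.card := by
  have h1 : ∀ T, ww p T * (((N ∩ T).card : ℝ) - p * N.card)^2
      = ww p T * ((N ∩ T).card : ℝ)^2 - (2 * p * N.card) * (ww p T * ((N ∩ T).card : ℝ))
        + (p * N.card)^2 * ww p T := by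
    intro T; ring
  rw [Finset.sum_congr rfl fun T _ => h1 T]
  rw [Finset.sum_add_distrib, Finset.sum_sub_distrib, ← Finset.mul_sum, ← Finset.mul_sum,
    exp_X2, exp_X, sum_ww]
  ring

end

set_option maxHeartbeats 1000000 in
private theorem main_aux {A B : Type} [Fintype A] [Fintype B] [DecidableEq A] [DecidableEq B]
    (N : A → Finset B) (μ : ℝ) (hμ0 : 0 < μ) (hμ1 : μ < 1/4)
    (hdeg : ∀ a, 1/μ ≤ ((N a).card : ℝ)) (hAne : Nonempty A) :
    ∃ T : Finset B, (T.card : ℝ) ≤ 8 * μ * Fintype.card B ∧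
      (∑ a, ((N a).card : ℝ))/4 ≤
        ∑ a ∈ Finset.univ.filter (fun a : A => μ * ((N a).card : ℝ) < (((N a) ∩ T).card : ℝ)),
          ((N a).card : ℝ) := by
  classical
  obtain ⟨a₀⟩ := hAne
  set cB : ℝ := (Fintype.card B : ℝ) with hcB
  set SD : ℝ := ∑ a, ((N a).card : ℝ) with hSD
  set p : ℝ := 4 * μ with hp
  have hp0 : 0 < p := by rw [hp]; linarith
  have hp1 : p < 1 := by rw [hp]; linarith
  have hd1 : ∀ a, 1 ≤ μ * ((N a).card : ℝ) := by
    intro a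
    have h := hdeg a
    rw [div_le_iff₀ hμ0] at h
    nlinarith
  have hdpos : ∀ a, (0:ℝ) < ((N a).card : ℝ) := by
    intro a; nlinarith [hd1 a]
  have hcB1 : 1 ≤ μ * cB := by
    have h2 : ((N a₀).card : ℝ) ≤ cB := by
      rw [hcB]; exact_mod_cast Finset.card_le_univ (N a₀)
    nlinarith [hd1 a₀]
  have hcBpos : 0 < cB := by nlinarith
  have hSDpos : 0 < SD := by
    rw [hSD]
    exact Finset.sum_pos (fun a _ => hdpos a) ⟨a₀, mem_univ a₀⟩
  by_contra hcon
  push_neg at hcon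
  -- indicator functions
  set indA : A → Finset B → ℝ :=
    fun a T => if (((N a) ∩ T).card : ℝ) ≤ μ * ((N a).card : ℝ) then 1 else 0 with hindA
  set indB : Finset B → ℝ :=
    fun T => if (T.card : ℝ) ≤ 8 * μ * cB then 0 else 1 with hindB
  set G : Finset B → ℝ := fun T =>
    if (T.card : ℝ) ≤ 8 * μ * cB then
      ∑ a ∈ Finset.univ.filter (fun a : A => μ * ((N a).card : ℝ) < (((N a) ∩ T).card : ℝ)),
        ((N a).card : ℝ)
    else 0 with hG
  have hGlt : ∀ T : Finset B, G T < SD / 4 := by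
    intro T
    by_cases hg : (T.card : ℝ) ≤ 8 * μ * cB
    · rw [hG]; simp only [if_pos hg]
      exact hcon T hg
    · rw [hG]; simp only [if_neg hg]
      linarith
  -- upper bound
  have hub : ∑ T ∈ (univ : Finset B).powerset, ww p T * G T < SD / 4 := by
    have h1 : ∑ T ∈ (univ : Finset B).powerset, ww p T * G T
        < ∑ T ∈ (univ : Finset B).powerset, ww p T * (SD / 4) := by
      refine Finset.sum_lt_sum_of_nonempty ⟨∅, Finset.mem_powerset.mpr (Finset.empty_subset _)⟩ ?_
      intro T _
      exact mul_lt_mul_of_pos_left (hGlt T) (ww_pos hp0 hp1 T)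
    rw [← Finset.sum_mul, sum_ww, one_mul] at h1
    exact h1
  -- pointwise lower bound
  have hpt : ∀ T : Finset B,
      SD - (∑ a, ((N a).card : ℝ) * indA a T) - SD * indB T ≤ G T := by
    intro T
    by_cases hg : (T.card : ℝ) ≤ 8 * μ * cB
    · rw [hG, hindB]; simp only [if_pos hg]
      have e1 : ∑ a, ((N a).card : ℝ) * indA a T
          = ∑ a ∈ Finset.univ.filter
              (fun a : A => ¬ (μ * ((N a).card : ℝ) < (((N a) ∩ T).card : ℝ))),
              ((N a).card : ℝ) := by
        rw [Finset.sum_filter]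
        refine Finset.sum_congr rfl fun a _ => ?_
        rw [hindA]
        simp only [not_lt]
        by_cases h : (((N a) ∩ T).card : ℝ) ≤ μ * ((N a).card : ℝ) <;> simp [h]
      have e2 := Finset.sum_filter_add_sum_filter_not Finset.univ
        (fun a : A => μ * ((N a).card : ℝ) < (((N a) ∩ T).card : ℝ))
        (fun a => ((N a).card : ℝ))
      rw [e1]
      rw [hSD]
      linarith [e2]
    · rw [hG, hindB]; simp only [if_neg hg]
      have : (0:ℝ) ≤ ∑ a, ((N a).card : ℝ) * indA a T := by
        refine Finset.sum_nonneg fun a _ => ?_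
        simp only [hindA]
        split_ifs <;> simp [Nat.cast_nonneg]
      linarith
  -- Chebyshev bound for each a
  have hA2 : ∀ a : A, ∑ T ∈ (univ : Finset B).powerset, ww p T * indA a T
      ≤ (1 - 4*μ) * (4/9) := by
    intro a
    set m : ℝ := ((N a).card : ℝ) with hm
    have hm1 : 1 ≤ μ * m := hd1 a
    have hmpos : 0 < m := hdpos a
    have key : ∀ T ∈ (univ : Finset B).powerset,
        ww p T * indA a T
          ≤ ww p T * (((((N a) ∩ T).card : ℝ) - p * m)^2 / (9 * μ^2 * m^2)) := by
      intro T _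
      refine mul_le_mul_of_nonneg_left ?_ (ww_pos hp0 hp1 T).le
      rw [hindA]
      by_cases hx : (((N a) ∩ T).card : ℝ) ≤ μ * m
      · simp only [if_pos (show (((N a) ∩ T).card : ℝ) ≤ μ * ((N a).card : ℝ) from hx)]
        rw [le_div_iff₀ (by positivity)]
        have hXnn : (0:ℝ) ≤ (((N a) ∩ T).card : ℝ) := Nat.cast_nonneg _
        have h1 : (0:ℝ) ≤ μ * m - (((N a) ∩ T).card : ℝ) := by linarith
        have h2 : (0:ℝ) ≤ 7 * (μ * m) - (((N a) ∩ T).card : ℝ) := by linarith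
        have := mul_nonneg h1 h2
        rw [hp]
        nlinarith
      · simp only [if_neg (show ¬ (((N a) ∩ T).card : ℝ) ≤ μ * ((N a).card : ℝ) from hx)]
        positivity
    have h2 : ∑ T ∈ (univ : Finset B).powerset, ww p T * indA a T
        ≤ (∑ T ∈ (univ : Finset B).powerset,
            ww p T * ((((N a) ∩ T).card : ℝ) - p * m)^2) / (9 * μ^2 * m^2) := by
      rw [Finset.sum_div]
      refine Finset.sum_le_sum fun T hT => ?_
      rw [mul_div_assoc]
      exact key T hT
    rw [exp_var p (N a)] at h2
    have h3 : p * (1 - p) * m / (9 * μ^2 * m^2) ≤ (1 - 4*μ) * (4/9) := by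
      rw [div_le_iff₀ (by positivity), hp]
      nlinarith [mul_nonneg (mul_nonneg hμ0.le hmpos.le) (sub_nonneg.mpr hm1),
        mul_pos hμ0 hmpos]
    exact h2.trans h3
  -- Chebyshev bound for the size of T
  have hB2 : ∑ T ∈ (univ : Finset B).powerset, ww p T * indB T ≤ (1 - 4*μ) / 4 := by
    have key : ∀ T ∈ (univ : Finset B).powerset,
        ww p T * indB T
          ≤ ww p T * ((((univ : Finset B) ∩ T).card : ℝ) - p * cB)^2 / (16 * μ^2 * cB^2) := by
      intro T _
      rw [mul_div_assoc]
      refine mul_le_mul_of_nonneg_left ?_ (ww_pos hp0 hp1 T).le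
      rw [hindB]
      have hTc : (((univ : Finset B) ∩ T).card : ℝ) = (T.card : ℝ) := by
        rw [Finset.univ_inter]
      by_cases hg : (T.card : ℝ) ≤ 8 * μ * cB
      · simp only [if_pos hg]
        positivity
      · simp only [if_neg hg]
        push_neg at hg
        rw [le_div_iff₀ (by positivity), hTc, hp]
        nlinarith [mul_pos hμ0 hcBpos]
    have h2 : ∑ T ∈ (univ : Finset B).powerset, ww p T * indB T
        ≤ (∑ T ∈ (univ : Finset B).powerset,
            ww p T * ((((univ : Finset B) ∩ T).card : ℝ) - p * cB)^2) / (16 * μ^2 * cB^2) := by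
      rw [Finset.sum_div]
      exact Finset.sum_le_sum key
    have hcB' : ((univ : Finset B).card : ℝ) = cB := by
      rw [hcB, Finset.card_univ]
    rw [show (∑ T ∈ (univ : Finset B).powerset,
          ww p T * ((((univ : Finset B) ∩ T).card : ℝ) - p * cB)^2)
        = p * (1 - p) * cB from by rw [← hcB']; exact exp_var p univ] at h2
    have h3 : p * (1 - p) * cB / (16 * μ^2 * cB^2) ≤ (1 - 4*μ) / 4 := by
      rw [div_le_iff₀ (by positivity), hp]
      nlinarith [mul_nonneg (mul_nonneg hμ0.le hcBpos.le) (sub_nonneg.mpr hcB1),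
        mul_pos hμ0 hcBpos]
    exact h2.trans h3
  -- assemble lower bound
  have c1 : ∑ T ∈ (univ : Finset B).powerset, ww p T * (∑ a, ((N a).card : ℝ) * indA a T)
      = ∑ a, (((N a).card : ℝ) * ∑ T ∈ (univ : Finset B).powerset, ww p T * indA a T) := by
    have hstep : ∀ T ∈ (univ : Finset B).powerset,
        ww p T * (∑ a, ((N a).card : ℝ) * indA a T)
          = ∑ a, ((N a).card : ℝ) * (ww p T * indA a T) := by
      intro T _
      rw [Finset.mul_sum]
      exact Finset.sum_congr rfl fun a _ => by ring
    rw [Finset.sum_congr rfl hstep, Finset.sum_comm]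
    exact Finset.sum_congr rfl fun a _ => by rw [← Finset.mul_sum]
  have c2 : ∑ T ∈ (univ : Finset B).powerset, ww p T * (SD * indB T)
      = SD * ∑ T ∈ (univ : Finset B).powerset, ww p T * indB T := by
    rw [Finset.mul_sum]
    exact Finset.sum_congr rfl fun T _ => by ring
  have e1 : ∑ T ∈ (univ : Finset B).powerset,
      ww p T * (SD - (∑ a, ((N a).card : ℝ) * indA a T) - SD * indB T)
      = SD
        - (∑ a, (((N a).card : ℝ) * ∑ T ∈ (univ : Finset B).powerset, ww p T * indA a T))
        - SD * (∑ T ∈ (univ : Finset B).powerset, ww p T * indB T) := by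
    calc ∑ T ∈ (univ : Finset B).powerset,
          ww p T * (SD - (∑ a, ((N a).card : ℝ) * indA a T) - SD * indB T)
        = ∑ T ∈ (univ : Finset B).powerset,
            (ww p T * SD - ww p T * (∑ a, ((N a).card : ℝ) * indA a T)
              - ww p T * (SD * indB T)) :=
          Finset.sum_congr rfl fun T _ => by ring
      _ = (∑ T ∈ (univ : Finset B).powerset, ww p T * SD)
            - (∑ T ∈ (univ : Finset B).powerset, ww p T * (∑ a, ((N a).card : ℝ) * indA a T))
            - ∑ T ∈ (univ : Finset B).powerset, ww p T * (SD * indB T) := by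
          rw [Finset.sum_sub_distrib, Finset.sum_sub_distrib]
      _ = SD
            - (∑ a, (((N a).card : ℝ) * ∑ T ∈ (univ : Finset B).powerset, ww p T * indA a T))
            - SD * (∑ T ∈ (univ : Finset B).powerset, ww p T * indB T) := by
          rw [c1, c2, ← Finset.sum_mul, sum_ww, one_mul]
  have s1 : ∑ T ∈ (univ : Finset B).powerset,
      ww p T * (SD - (∑ a, ((N a).card : ℝ) * indA a T) - SD * indB T)
      ≤ ∑ T ∈ (univ : Finset B).powerset, ww p T * G T :=
    Finset.sum_le_sum fun T _ => mul_le_mul_of_nonneg_left (hpt T) (ww_pos hp0 hp1 T).le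
  rw [e1] at s1
  have s2 : ∑ a, (((N a).card : ℝ) * ∑ T ∈ (univ : Finset B).powerset, ww p T * indA a T)
      ≤ ∑ a, ((N a).card : ℝ) * ((1 - 4*μ) * (4/9)) :=
    Finset.sum_le_sum fun a _ => mul_le_mul_of_nonneg_left (hA2 a) (hdpos a).le
  have s3 : ∑ a, ((N a).card : ℝ) * ((1 - 4*μ) * (4/9)) = SD * ((1 - 4*μ) * (4/9)) := by
    rw [← Finset.sum_mul, ← hSD]
  have s4 : SD * (∑ T ∈ (univ : Finset B).powerset, ww p T * indB T)
      ≤ SD * ((1 - 4*μ) / 4) :=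
    mul_le_mul_of_nonneg_left hB2 hSDpos.le
  rw [s3] at s2
  nlinarith [mul_pos hSDpos hμ0]

/-- under `0 < μ < 1/4`, degrees at least `1/μ`, and `|A| ≤ |E|/4`, there
is `B* ⊆ B` with `|B*| ≤ 8μ|B|` such that the saturated vertices
`S = {a : |N(a) ∩ B*| > μ·d_a}` carry at least `|E|/4` edges. -/
theorem stmt_10 {A B : Type} [Fintype A] [Fintype B] [DecidableEq A] [DecidableEq B]
    (E : Finset (A × B)) (μ : ℝ) (hμ0 : 0 < μ) (hμ1 : μ < 1/4)
    (hdeg : ∀ a : A,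
      1 / μ ≤ ((Finset.univ.filter fun b : B => (a, b) ∈ E).card : ℝ))
    (hA : (Fintype.card A : ℝ) ≤ (E.card : ℝ) / 4) :
    ∃ Bstar : Finset B,
      (Bstar.card : ℝ) ≤ 8 * μ * Fintype.card B ∧
      (E.card : ℝ) / 4 ≤
        ∑ a ∈ Finset.univ.filter (fun a : A =>
            μ * ((Finset.univ.filter fun b : B => (a, b) ∈ E).card : ℝ) <
              (((Finset.univ.filter fun b : B => (a, b) ∈ E) ∩ Bstar).card : ℝ)),
          ((Finset.univ.filter fun b : B => (a, b) ∈ E).card : ℝ) := by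
  classical
  cases isEmpty_or_nonempty A with
  | inl hAe =>
    have hBnn : (0:ℝ) ≤ (Fintype.card B : ℝ) := Nat.cast_nonneg _
    have hEempty : E = ∅ := Finset.eq_empty_of_forall_notMem fun x _ => hAe.elim x.1
    refine ⟨∅, ?_, ?_⟩
    · simp only [Finset.card_empty, Nat.cast_zero]
      nlinarith
    · rw [hEempty]
      simp only [Finset.card_empty, Nat.cast_zero, zero_div]
      exact Finset.sum_nonneg fun a _ => Nat.cast_nonneg _
  | inr hAne =>
    obtain ⟨T, hT1, hT2⟩ := main_aux
      (fun a => Finset.univ.filter fun b : B => (a, b) ∈ E) μ hμ0 hμ1 hdeg hAne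
    refine ⟨T, hT1, ?_⟩
    have hsumN : E.card = ∑ a : A, (Finset.univ.filter fun b : B => (a, b) ∈ E).card := by
      rw [Finset.card_eq_sum_card_fiberwise (f := Prod.fst) (t := Finset.univ)
        (fun x _ => Finset.mem_univ _)]
      refine Finset.sum_congr rfl fun a _ => ?_
      refine Finset.card_bij' (fun x _ => x.2) (fun b _ => (a, b)) ?_ ?_ ?_ ?_
      · intro x hx
        obtain ⟨hxE, hxa⟩ := Finset.mem_filter.mp hx
        refine Finset.mem_filter.mpr ⟨Finset.mem_univ _, ?_⟩
        have h' : (x.1, x.2) ∈ E := by rwa [Prod.mk.eta]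
        rwa [hxa] at h'
      · intro b hb
        rw [Finset.mem_filter] at hb ⊢
        exact ⟨hb.2, rfl⟩
      · intro x hx
        have hxa : x.1 = a := (Finset.mem_filter.mp hx).2
        show (a, x.2) = x
        rw [← hxa]
      · intro b _
        rfl
    have hcast : (E.card : ℝ)
        = ∑ a : A, ((Finset.univ.filter fun b : B => (a, b) ∈ E).card : ℝ) := by
      rw [hsumN]; push_cast; rfl
    rw [hcast]
    exact hT2
end

section
/- Let (k̃, ñ, {S_{i,j}}) be a Matrix Tiling instance with k̃ ≥ 1. If there exists a full solution, i.e., a choice s_{i,j} ∈ S_{i,j} (no ★ entries) for all (i,j) ∈ [k̃] × [k̃] such that (s_{i,j})₁ = (s_{i,j+1})₁ for all i ∈ [k̃], j ∈ [k̃−1], and (s_{i,j})₂ = (s_{i+1,j})₂ for all i ∈ [k̃−1], j ∈ [k̃], then the associated projection game is satisfiable: some assignment satisfies all of its edges. -/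
/-- if a Matrix Tiling instance has a full solution (no ★ entries), then
its associated projection game is satisfiable.
Indices are 1-based; `A = ℕ × ℕ` hosts the vertices `a_{i,j}`;
`B = (ℕ × ℕ) ⊕ (ℕ × ℕ)` hosts the vertices `Sum.inl (i, j) = b_{i+1/2, j}` and
`Sum.inr (i, j) = b_{i, j+1/2}`; `Σ_A = ℕ × ℕ` hosts `[ñ] × [ñ]` and
`Σ_B = ℕ ⊕ Bool` hosts `[ñ]` plus the two extra symbols `Sum.inr true = ■`,
`Sum.inr false = ◆`. -/
theorem stmt_14 (k n : ℕ) (hk : 1 ≤ k) (hn : 1 ≤ n)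
    (S : ℕ → ℕ → Finset (ℕ × ℕ))
    (hS : ∀ i ∈ Finset.Icc 1 k, ∀ j ∈ Finset.Icc 1 k, ∀ p ∈ S i j,
      p.1 ∈ Finset.Icc 1 n ∧ p.2 ∈ Finset.Icc 1 n)
    (Egame : Finset ((ℕ × ℕ) × ((ℕ × ℕ) ⊕ (ℕ × ℕ))))
    (hEgame : Egame =
      (((Finset.Icc 1 (k - 1)) ×ˢ (Finset.Icc 1 k)).biUnion fun p =>
        ({((p.1, p.2), Sum.inl p), ((p.1 + 1, p.2), Sum.inl p)} :
          Finset ((ℕ × ℕ) × ((ℕ × ℕ) ⊕ (ℕ × ℕ))))) ∪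
      (((Finset.Icc 1 k) ×ˢ (Finset.Icc 1 (k - 1))).biUnion fun p =>
        ({((p.1, p.2), Sum.inr p), ((p.1, p.2 + 1), Sum.inr p)} :
          Finset ((ℕ × ℕ) × ((ℕ × ℕ) ⊕ (ℕ × ℕ))))))
    (π : ((ℕ × ℕ) × ((ℕ × ℕ) ⊕ (ℕ × ℕ))) → (ℕ × ℕ) → (ℕ ⊕ Bool))
    (hπ : π = fun e σ =>
      match e.2 with
      | Sum.inl zt =>
          if σ ∈ S e.1.1 e.1.2 then Sum.inl σ.2
          else if zt.1 < e.1.1 then Sum.inr true else Sum.inr false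
      | Sum.inr zt =>
          if σ ∈ S e.1.1 e.1.2 then Sum.inl σ.1
          else if zt.2 < e.1.2 then Sum.inr true else Sum.inr false)
    (s : ℕ → ℕ → ℕ × ℕ)
    (hs : ∀ i ∈ Finset.Icc 1 k, ∀ j ∈ Finset.Icc 1 k, s i j ∈ S i j)
    (hrow : ∀ i ∈ Finset.Icc 1 k, ∀ j ∈ Finset.Icc 1 (k - 1),
      (s i j).1 = (s i (j + 1)).1)
    (hcol : ∀ i ∈ Finset.Icc 1 (k - 1), ∀ j ∈ Finset.Icc 1 k,
      (s i j).2 = (s (i + 1) j).2) :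
    ∃ (φA : ℕ × ℕ → ℕ × ℕ) (φB : (ℕ × ℕ) ⊕ (ℕ × ℕ) → ℕ ⊕ Bool),
      ∀ e ∈ Egame, π e (φA e.1) = φB e.2 := by
  refine ⟨fun p => s p.1 p.2,
    Sum.elim (fun p => Sum.inl (s p.1 p.2).2) (fun p => Sum.inl (s p.1 p.2).1), ?_⟩
  intro e he
  subst hEgame hπ
  simp only [Finset.mem_union, Finset.mem_biUnion, Finset.mem_product,
    Finset.mem_insert, Finset.mem_singleton, Finset.mem_Icc] at he
  have hmem : ∀ i j, 1 ≤ i → i ≤ k → 1 ≤ j → j ≤ k → s i j ∈ S i j := by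
    intro i j h1 h2 h3 h4
    exact hs i (Finset.mem_Icc.mpr ⟨h1, h2⟩) j (Finset.mem_Icc.mpr ⟨h3, h4⟩)
  rcases he with ⟨⟨i, j⟩, ⟨⟨hi1, hi2⟩, hj1, hj2⟩, he | he⟩ | ⟨⟨i, j⟩, ⟨⟨hi1, hi2⟩, hj1, hj2⟩, he | he⟩ <;>
    subst he <;> simp only [Sum.elim_inl, Sum.elim_inr]
  · rw [if_pos (hmem i j hi1 (hi2.trans (Nat.sub_le k 1)) hj1 hj2)]
  · have hik : i + 1 ≤ k := by omega
    rw [if_pos (hmem (i+1) j (by omega) hik hj1 hj2)]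
    exact congrArg _ (hcol i (Finset.mem_Icc.mpr ⟨hi1, hi2⟩) j (Finset.mem_Icc.mpr ⟨hj1, hj2⟩)).symm
  · rw [if_pos (hmem i j hi1 hi2 hj1 (hj2.trans (Nat.sub_le k 1)))]
  · have hjk : j + 1 ≤ k := by omega
    rw [if_pos (hmem i (j+1) hi1 hi2 (by omega) hjk)]
    exact congrArg _ (hrow i (Finset.mem_Icc.mpr ⟨hi1, hi2⟩) j (Finset.mem_Icc.mpr ⟨hj1, hj2⟩)).symm
end
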